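/- arXiv:math/9201232 — 5 statements merged into one kernel-verified Lean document; each statement's English description precedes it below -/
import Mathlib

section
/- Let (Ω, μ) be a measure space and f ∈ L₁(μ) + L_∞(μ). Then for every t > 0, K_t(f; L₁(μ), L_∞(μ)) = t · f**(t), where f**(t) = t⁻¹ ∫₀ᵗ f*(s) ds and f* is the nonincreasing rearrangement of |f|. -/
open MeasureTheory ENNReal Set

/-- The `K_t`-functional of the couple `(L₁(μ), L_∞(μ))`. -/
noncomputable def Ksc {α : Type*} [MeasurableSpace α] (μ : Measure α) (t : ℝ) (f : α → ℝ) : ℝ :=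
  sInf {r | ∃ g h : α → ℝ, MemLp g 1 μ ∧ MemLp h ⊤ μ ∧ f =ᵐ[μ] g + h ∧
      r = (eLpNorm g 1 μ).toReal + t * (eLpNorm h ⊤ μ).toReal}

/-- Membership in `L₁(μ) + L_∞(μ)`. -/
def MemL1pLinf {α : Type*} [MeasurableSpace α] (μ : Measure α) (f : α → ℝ) : Prop :=
  ∃ g h : α → ℝ, MemLp g 1 μ ∧ MemLp h ⊤ μ ∧ f =ᵐ[μ] g + h

/-- The nonincreasing rearrangement `f*` of `|f|`. -/
noncomputable def rearr {α : Type*} [MeasurableSpace α] (μ : Measure α) (f : α → ℝ) (s : ℝ) : ℝ :=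
  sInf {l : ℝ | 0 ≤ l ∧ μ {x | l < |f x|} ≤ ENNReal.ofReal s}

namespace KHelper

variable {α : Type*} [MeasurableSpace α] {μ : Measure α} {f g h : α → ℝ} {s t : ℝ}

/-- The defining set. -/
def S (μ : Measure α) (f : α → ℝ) (s : ℝ) : Set ℝ :=
  {l : ℝ | 0 ≤ l ∧ μ {x | l < |f x|} ≤ ENNReal.ofReal s}

lemma rearr_def : rearr μ f s = sInf (S μ f s) := rfl

lemma S_bddBelow : BddBelow (S μ f s) := ⟨0, fun _ hl => hl.1⟩

lemma rearr_nonneg : 0 ≤ rearr μ f s := Real.sInf_nonneg fun _ hl => hl.1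

lemma dist_antitone {l l' : ℝ} (hll' : l ≤ l') :
    μ {x | l' < |f x|} ≤ μ {x | l < |f x|} :=
  measure_mono fun x hx => lt_of_le_of_lt hll' hx

/-- The inf is attained: closedness via continuity from below. -/
lemma rearr_mem (hne : (S μ f s).Nonempty) : rearr μ f s ∈ S μ f s := by
  rw [rearr_def]
  set a := sInf (S μ f s) with ha
  have ha0 : 0 ≤ a := rearr_nonneg
  refine ⟨ha0, ?_⟩
  have hU : {x | a < |f x|} = ⋃ n : ℕ, {x | a + 1 / (n + 1) < |f x|} := by
    ext x
    simp only [mem_setOf_eq, mem_iUnion]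
    constructor
    · intro hx
      obtain ⟨n, hn⟩ := exists_nat_one_div_lt (sub_pos.2 hx)
      exact ⟨n, by push_cast at hn ⊢; linarith⟩
    · rintro ⟨n, hn⟩
      have : (0:ℝ) < 1 / (n + 1) := by positivity
      linarith
  rw [hU]
  have hmono : Monotone fun n : ℕ => {x | a + 1 / (n + 1) < |f x|} := by
    intro m n hmn x hx
    simp only [mem_setOf_eq] at hx ⊢
    have hc : (m:ℝ) ≤ (n:ℝ) := Nat.cast_le.2 hmn
    have h1 : (1:ℝ) / (n + 1) ≤ 1 / (m + 1) :=
      one_div_le_one_div_of_le (by positivity) (by linarith)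
    linarith
  rw [hmono.measure_iUnion]
  refine iSup_le fun n => ?_
  have : (0:ℝ) < 1 / (n + 1) := by positivity
  obtain ⟨l, hl, hl2⟩ := Real.lt_sInf_add_pos hne this
  exact le_trans (dist_antitone (by rw [← ha] at hl2; linarith)) hl.2

lemma rearr_le_iff (hne : (S μ f s).Nonempty) {l : ℝ} (hl : 0 ≤ l) :
    rearr μ f s ≤ l ↔ μ {x | l < |f x|} ≤ ENNReal.ofReal s := by
  constructor
  · intro hle
    exact le_trans (dist_antitone hle) (rearr_mem hne).2
  · intro hd
    exact csInf_le S_bddBelow ⟨hl, hd⟩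

lemma abs_ae_le_of_memTop (hh : MemLp h ⊤ μ) :
    ∀ᵐ x ∂μ, |h x| ≤ (eLpNorm h ⊤ μ).toReal := by
  have hb := hh.2
  rw [eLpNorm_exponent_top] at hb ⊢
  filter_upwards [ae_le_eLpNormEssSup (f := h) (μ := μ)] with x hx
  have := ENNReal.toReal_mono hb.ne hx
  simpa [Real.norm_eq_abs] using this

lemma S_nonempty (hg : MemLp g 1 μ) (hh : MemLp h ⊤ μ) (hfgh : f =ᵐ[μ] g + h)
    (hs : 0 < s) : (S μ f s).Nonempty := by
  set b := (eLpNorm h ⊤ μ).toReal with hbdef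
  have hb0 : 0 ≤ b := ENNReal.toReal_nonneg
  set l := (eLpNorm g 1 μ).toReal / s + 1 with hldef
  have hl0 : 0 < l := by positivity
  have hmarkov : μ {x | l < |g x|} ≤ ENNReal.ofReal s := by
    have h1 : μ {x | l < |g x|} ≤ μ {x | ENNReal.ofReal l ≤ ENNReal.ofReal |g x|} := by
      apply measure_mono
      intro x hx
      exact ENNReal.ofReal_le_ofReal (le_of_lt hx)
    have hgm : AEMeasurable (fun x => ENNReal.ofReal |g x|) μ :=
      ENNReal.measurable_ofReal.comp_aemeasurable
        (measurable_abs.comp_aemeasurable hg.aestronglyMeasurable.aemeasurable)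
    have h2 := meas_ge_le_lintegral_div (μ := μ) (ε := ENNReal.ofReal l)
      hgm (by simpa using hl0) (by simp)
    have hg1 : ∫⁻ x, ENNReal.ofReal |g x| ∂μ = eLpNorm g 1 μ := by
      rw [eLpNorm_one_eq_lintegral_enorm]
      simp_rw [← Real.enorm_eq_ofReal_abs]
    have hfin : eLpNorm g 1 μ ≠ ∞ := hg.2.ne
    have hsl : s * l = (eLpNorm g 1 μ).toReal + s := by
      rw [hldef]; field_simp
    calc μ {x | l < |g x|} ≤ μ {x | ENNReal.ofReal l ≤ ENNReal.ofReal |g x|} := h1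
      _ ≤ (∫⁻ x, ENNReal.ofReal |g x| ∂μ) / ENNReal.ofReal l := h2
      _ = eLpNorm g 1 μ / ENNReal.ofReal l := by rw [hg1]
      _ ≤ ENNReal.ofReal s := by
          rw [ENNReal.div_le_iff_le_mul (Or.inl (by simpa using hl0)) (Or.inl ENNReal.ofReal_ne_top)]
          rw [← ENNReal.ofReal_mul hs.le]
          calc eLpNorm g 1 μ = ENNReal.ofReal (eLpNorm g 1 μ).toReal :=
                (ENNReal.ofReal_toReal hfin).symm
            _ ≤ ENNReal.ofReal (s * l) := by
                apply ENNReal.ofReal_le_ofReal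
                rw [hsl]; linarith
  refine ⟨l + b, ⟨by positivity, ?_⟩⟩
  have hsub : {x | l + b < |f x|} ≤ᵐ[μ] {x | l < |g x|} := by
    filter_upwards [hfgh, abs_ae_le_of_memTop hh] with x hfx hhx hmem
    have hm2 : l + b < |f x| := hmem
    have habs : |f x| ≤ |g x| + |h x| := by
      rw [hfx, Pi.add_apply]; exact abs_add_le _ _
    show l < |g x|
    linarith
  exact le_trans (measure_mono_ae hsub) hmarkov

lemma dist_congr (hff' : f =ᵐ[μ] g) (l : ℝ) :
    μ {x | l < |f x|} = μ {x | l < |g x|} := by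
  apply measure_congr
  filter_upwards [hff'] with x hx
  simp only [eq_iff_iff]
  show l < |f x| ↔ l < |g x|
  rw [hx]

lemma rearr_congr (hff' : f =ᵐ[μ] g) : rearr μ f = rearr μ g := by
  funext s
  rw [rearr_def, rearr_def]
  congr 1
  unfold S
  ext l
  simp only [mem_setOf_eq, dist_congr hff' l]

lemma rearr_antitoneOn (hne : ∀ u, 0 < u → (S μ f u).Nonempty) :
    AntitoneOn (rearr μ f) (Ioi (0:ℝ)) := by
  intro u hu v _ huv
  rw [rearr_def, rearr_def]
  exact csInf_le_csInf S_bddBelow (hne u hu)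
    (fun l hl => ⟨hl.1, le_trans hl.2 (ENNReal.ofReal_le_ofReal huv)⟩)

lemma gtSet_eq_top (hne : ∀ u, 0 < u → (S μ f u).Nonempty) {l : ℝ} (hl : 0 ≤ l)
    (hd : μ {x | l < |f x|} = ∞) :
    {u : ℝ | 0 < u ∧ l < rearr μ f u} = Ioi (0:ℝ) := by
  · ext u
    simp only [mem_setOf_eq, mem_Ioi, and_iff_left_iff_imp]
    intro hu
    by_contra hcon
    push_neg at hcon
    have := (rearr_le_iff (hne u hu) hl).1 hcon
    rw [hd] at this
    exact (ENNReal.ofReal_lt_top.trans_le this).false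

lemma gtSet_eq_ne (hne : ∀ u, 0 < u → (S μ f u).Nonempty) {l : ℝ} (hl : 0 ≤ l)
    (hd : μ {x | l < |f x|} ≠ ∞) :
    {u : ℝ | 0 < u ∧ l < rearr μ f u} = Ioo 0 (μ {x | l < |f x|}).toReal := by
  · ext u
    simp only [mem_setOf_eq, mem_Ioo]
    constructor
    · rintro ⟨hu, hru⟩
      refine ⟨hu, ?_⟩
      by_contra hcon
      push_neg at hcon
      have : μ {x | l < |f x|} ≤ ENNReal.ofReal u :=
        (ENNReal.le_ofReal_iff_toReal_le hd hu.le).2 hcon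
      exact absurd ((rearr_le_iff (hne u hu) hl).2 this) (not_le.2 hru)
    · rintro ⟨hu, hru⟩
      refine ⟨hu, ?_⟩
      by_contra hcon
      push_neg at hcon
      have := (rearr_le_iff (hne u hu) hl).1 hcon
      rw [ENNReal.le_ofReal_iff_toReal_le hd hu.le] at this
      linarith

lemma volume_gtSet (hne : ∀ u, 0 < u → (S μ f u).Nonempty) {l : ℝ} (hl : 0 ≤ l) :
    volume {u : ℝ | 0 < u ∧ l < rearr μ f u} = μ {x | l < |f x|} := by
  by_cases hd : μ {x | l < |f x|} = ∞
  · rw [gtSet_eq_top hne hl hd, Real.volume_Ioi, hd]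
  · rw [gtSet_eq_ne hne hl hd, Real.volume_Ioo, sub_zero, ENNReal.ofReal_toReal hd]

lemma measurableSet_gtSet (hne : ∀ u, 0 < u → (S μ f u).Nonempty) {l : ℝ} (hl : 0 ≤ l) :
    MeasurableSet {u : ℝ | 0 < u ∧ l < rearr μ f u} := by
  by_cases hd : μ {x | l < |f x|} = ∞
  · rw [gtSet_eq_top hne hl hd]; exact measurableSet_Ioi
  · rw [gtSet_eq_ne hne hl hd]; exact measurableSet_Ioo

lemma measurable_rearrExt (hne : ∀ u, 0 < u → (S μ f u).Nonempty) :
    Measurable ((Ioi (0:ℝ)).indicator (rearr μ f)) := by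
  apply measurable_of_Ioi
  intro l
  by_cases hl : 0 ≤ l
  · have : (Ioi (0:ℝ)).indicator (rearr μ f) ⁻¹' Ioi l
        = {u : ℝ | 0 < u ∧ l < rearr μ f u} := by
      ext u
      simp only [mem_preimage, mem_Ioi, mem_setOf_eq]
      by_cases hu : 0 < u
      · rw [indicator_of_mem (mem_Ioi.2 hu)]
        simp [hu]
      · rw [indicator_of_notMem (by simpa using hu)]
        constructor
        · intro hlt; linarith
        · rintro ⟨h1, _⟩; exact absurd h1 hu
    rw [this]
    exact measurableSet_gtSet hne hl
  · have : (Ioi (0:ℝ)).indicator (rearr μ f) ⁻¹' Ioi l = univ := by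
      ext u
      simp only [mem_preimage, mem_Ioi, mem_univ, iff_true]
      push_neg at hl
      refine lt_of_lt_of_le hl ?_
      by_cases hu : u ∈ Ioi (0:ℝ)
      · rw [indicator_of_mem hu]; exact rearr_nonneg
      · rw [indicator_of_notMem hu]
    rw [this]
    exact MeasurableSet.univ

lemma lintegral_abs_eq_eLpNorm (g : α → ℝ) :
    ∫⁻ x, ENNReal.ofReal |g x| ∂μ = eLpNorm g 1 μ := by
  rw [eLpNorm_one_eq_lintegral_enorm]
  simp_rw [← Real.enorm_eq_ofReal_abs]

lemma aemeasurable_rearr (hne : ∀ u, 0 < u → (S μ f u).Nonempty) :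
    AEMeasurable (rearr μ f) (volume.restrict (Ioi (0:ℝ))) := by
  apply (measurable_rearrExt hne).aemeasurable.congr
  rw [Filter.EventuallyEq, ae_restrict_iff' measurableSet_Ioi]
  exact Filter.Eventually.of_forall fun u hu => indicator_of_mem hu _

lemma lintegral_rearr_shift (hmeas : AEMeasurable f μ)
    (hne : ∀ u, 0 < u → (S μ f u).Nonempty) {c : ℝ} (hc : 0 ≤ c) :
    ∫⁻ u in Ioi (0:ℝ), ENNReal.ofReal (max (rearr μ f u - c) 0)
      = ∫⁻ x, ENNReal.ofReal (max (|f x| - c) 0) ∂μ := by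
  have hR := lintegral_eq_lintegral_meas_lt μ (f := fun x => max (|f x| - c) 0)
    (Filter.Eventually.of_forall fun x => le_max_right _ _)
    (((measurable_abs.comp_aemeasurable hmeas).sub aemeasurable_const).max aemeasurable_const)
  have hL := lintegral_eq_lintegral_meas_lt (volume.restrict (Ioi (0:ℝ)))
    (f := fun u => max (rearr μ f u - c) 0)
    (Filter.Eventually.of_forall fun u => le_max_right _ _)
    ((((aemeasurable_rearr hne).sub aemeasurable_const).max aemeasurable_const))
  rw [hR, hL]
  apply setLIntegral_congr_fun measurableSet_Ioi
  intro v hv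
  rw [mem_Ioi] at hv
  have hset1 : {u : ℝ | v < max (rearr μ f u - c) 0} = {u : ℝ | c + v < rearr μ f u} := by
    ext u
    simp only [mem_setOf_eq, lt_max_iff]
    constructor
    · rintro (hlt | hlt)
      · linarith
      · linarith
    · intro hlt; left; linarith
  have hset2 : {x | v < max (|f x| - c) 0} = {x | c + v < |f x|} := by
    ext x
    simp only [mem_setOf_eq, lt_max_iff]
    constructor
    · rintro (hlt | hlt)
      · linarith
      · linarith
    · intro hlt; left; linarith
  beta_reduce
  rw [hset1, hset2, Measure.restrict_apply' measurableSet_Ioi]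
  have : {u : ℝ | c + v < rearr μ f u} ∩ Ioi 0 = {u : ℝ | 0 < u ∧ c + v < rearr μ f u} := by
    ext u; simp only [mem_inter_iff, mem_setOf_eq, mem_Ioi]; tauto
  rw [this, volume_gtSet hne (by linarith)]

lemma lintegral_rearr_eq (hmeas : AEMeasurable f μ)
    (hne : ∀ u, 0 < u → (S μ f u).Nonempty) :
    ∫⁻ u in Ioi (0:ℝ), ENNReal.ofReal (rearr μ f u) = eLpNorm f 1 μ := by
  have := lintegral_rearr_shift hmeas hne (le_refl (0:ℝ))
  simp only [sub_zero] at this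
  rw [← lintegral_abs_eq_eLpNorm f]
  calc ∫⁻ u in Ioi (0:ℝ), ENNReal.ofReal (rearr μ f u)
      = ∫⁻ u in Ioi (0:ℝ), ENNReal.ofReal (max (rearr μ f u) 0) := by
        apply lintegral_congr_ae
        apply Filter.Eventually.of_forall
        intro u
        simp only []
        rw [max_eq_left rearr_nonneg]
    _ = ∫⁻ x, ENNReal.ofReal (max (|f x|) 0) ∂μ := this
    _ = ∫⁻ x, ENNReal.ofReal (|f x|) ∂μ := by
        apply lintegral_congr_ae
        apply Filter.Eventually.of_forall
        intro x
        simp only []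
        rw [max_eq_left (abs_nonneg _)]

lemma meas_abs_gt_bound (hh : MemLp h ⊤ μ) :
    μ {x | (eLpNorm h ⊤ μ).toReal < |h x|} = 0 := by
  have := abs_ae_le_of_memTop hh
  rw [ae_iff] at this
  convert this using 2
  ext x
  simp only [mem_setOf_eq, not_le]

lemma rearr_subadd (hg : MemLp g 1 μ) (hh : MemLp h ⊤ μ) (hfgh : f =ᵐ[μ] g + h)
    {u : ℝ} (hu : 0 < u) :
    rearr μ f u ≤ rearr μ g u + (eLpNorm h ⊤ μ).toReal := by
  have hneg : ∀ v, 0 < v → (S μ g v).Nonempty := fun v hv =>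
    S_nonempty hg (MemLp.zero) (by simp) hv
  set a := rearr μ g u with hadef
  obtain ⟨ha0, hag⟩ := rearr_mem (hneg u hu)
  set b := (eLpNorm h ⊤ μ).toReal with hbdef
  have hb0 : 0 ≤ b := ENNReal.toReal_nonneg
  apply csInf_le S_bddBelow
  refine ⟨by positivity, ?_⟩
  have hsub : {x | a + b < |f x|} ≤ᵐ[μ] {x | a < |g x|} := by
    filter_upwards [hfgh, abs_ae_le_of_memTop hh] with x hfx hhx hmem
    have hm2 : a + b < |f x| := hmem
    have habs : |f x| ≤ |g x| + |h x| := by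
      rw [hfx, Pi.add_apply]; exact abs_add_le _ _
    show a < |g x|
    linarith
  exact le_trans (measure_mono_ae hsub) hag

lemma lintegral_rearr_Ioc_le (hg : MemLp g 1 μ) (hh : MemLp h ⊤ μ)
    (hfgh : f =ᵐ[μ] g + h) {t : ℝ} (ht : 0 < t) :
    ∫⁻ u in Ioc (0:ℝ) t, ENNReal.ofReal (rearr μ f u)
      ≤ eLpNorm g 1 μ + ENNReal.ofReal t * eLpNorm h ⊤ μ := by
  set b := (eLpNorm h ⊤ μ).toReal with hbdef
  have hneg : ∀ v, 0 < v → (S μ g v).Nonempty := fun v hv =>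
    S_nonempty hg (MemLp.zero) (by simp) hv
  have step1 : ∫⁻ u in Ioc (0:ℝ) t, ENNReal.ofReal (rearr μ f u)
      ≤ ∫⁻ u in Ioc (0:ℝ) t, (ENNReal.ofReal (rearr μ g u) + ENNReal.ofReal b) := by
    apply lintegral_mono_ae
    rw [ae_restrict_iff' measurableSet_Ioc]
    apply Filter.Eventually.of_forall
    intro u hu
    rw [← ENNReal.ofReal_add rearr_nonneg ENNReal.toReal_nonneg]
    exact ENNReal.ofReal_le_ofReal (rearr_subadd hg hh hfgh hu.1)
  have step2 : ∫⁻ u in Ioc (0:ℝ) t, (ENNReal.ofReal (rearr μ g u) + ENNReal.ofReal b)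
      = (∫⁻ u in Ioc (0:ℝ) t, ENNReal.ofReal (rearr μ g u)) + ENNReal.ofReal b * ENNReal.ofReal t := by
    rw [lintegral_add_right _ measurable_const, setLIntegral_const, Real.volume_Ioc, sub_zero]
  have step3 : ∫⁻ u in Ioc (0:ℝ) t, ENNReal.ofReal (rearr μ g u) ≤ eLpNorm g 1 μ := by
    rw [← lintegral_rearr_eq hg.aestronglyMeasurable.aemeasurable hneg]
    exact lintegral_mono_set Ioc_subset_Ioi_self
  calc ∫⁻ u in Ioc (0:ℝ) t, ENNReal.ofReal (rearr μ f u)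
      ≤ _ := step1
    _ = _ := step2
    _ ≤ eLpNorm g 1 μ + ENNReal.ofReal b * ENNReal.ofReal t := by
        exact add_le_add_left step3 _
    _ ≤ eLpNorm g 1 μ + ENNReal.ofReal t * eLpNorm h ⊤ μ := by
        apply add_le_add_right
        rw [mul_comm]
        exact mul_le_mul_right ENNReal.ofReal_toReal_le _

end KHelper

open KHelper in
/-- `K_t(f; L₁, L_∞) = t · f**(t)` where `f**(t) = t⁻¹ ∫₀ᵗ f*(s) ds`. -/
theorem Ksc_eq_mul_doubleStar {α : Type*} [MeasurableSpace α] (μ : Measure α) [SigmaFinite μ]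
    (f : α → ℝ) (hmeas : AEMeasurable f μ) (hf : MemL1pLinf μ f) (t : ℝ) (ht : 0 < t) :
    Ksc μ t f = t * ((∫ s in (0:ℝ)..t, rearr μ f s) / t) := by
  rw [mul_comm, div_mul_cancel₀ _ ht.ne']
  obtain ⟨g₀, h₀, hg₀, hh₀, hfgh₀⟩ := hf
  have hnef : ∀ u, 0 < u → (S μ f u).Nonempty := fun u hu => S_nonempty hg₀ hh₀ hfgh₀ hu
  set A := ∫⁻ u in Ioc (0:ℝ) t, ENNReal.ofReal (rearr μ f u) with hAdef
  have hAle := lintegral_rearr_Ioc_le hg₀ hh₀ hfgh₀ ht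
  have hAfin : A ≠ ∞ := by
    refine ne_top_of_le_ne_top ?_ hAle
    exact (ENNReal.add_lt_top.2 ⟨hg₀.2, ENNReal.mul_lt_top ENNReal.ofReal_lt_top hh₀.2⟩).ne
  -- the interval integral equals A.toReal
  have hrearr_meas : AEStronglyMeasurable (rearr μ f) (volume.restrict (Ioc (0:ℝ) t)) := by
    have hle : volume.restrict (Ioc (0:ℝ) t) ≤ volume.restrict (Ioi (0:ℝ)) :=
      Measure.restrict_mono Ioc_subset_Ioi_self le_rfl
    exact ((aemeasurable_rearr hnef).mono_measure hle).aestronglyMeasurable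
  have hI : ∫ s in (0:ℝ)..t, rearr μ f s = A.toReal := by
    rw [intervalIntegral.integral_of_le ht.le]
    rw [integral_eq_lintegral_of_nonneg_ae
      (Filter.Eventually.of_forall fun u => rearr_nonneg) hrearr_meas]
  rw [hI]
  unfold Ksc
  have hbdd : BddBelow {r | ∃ g h : α → ℝ, MemLp g 1 μ ∧ MemLp h ⊤ μ ∧ f =ᵐ[μ] g + h ∧
      r = (eLpNorm g 1 μ).toReal + t * (eLpNorm h ⊤ μ).toReal} := by
    refine ⟨0, ?_⟩
    rintro r ⟨g, h, hg, hh, hfgh, rfl⟩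
    have h1 : (0:ℝ) ≤ (eLpNorm g 1 μ).toReal := ENNReal.toReal_nonneg
    have h2 : (0:ℝ) ≤ (eLpNorm h ⊤ μ).toReal := ENNReal.toReal_nonneg
    nlinarith
  apply le_antisymm
  · -- upper bound : construct the truncation
    set f' := hmeas.mk f with hf'def
    have hff' : f =ᵐ[μ] f' := hmeas.ae_eq_mk
    have hmeas' : Measurable f' := hmeas.measurable_mk
    set lam := rearr μ f t with hlamdef
    have hlam0 : 0 ≤ lam := rearr_nonneg
    set h₁ : α → ℝ := fun x => min (max (f' x) (-lam)) lam with hh₁def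
    set g₁ : α → ℝ := fun x => f' x - h₁ x with hg₁def
    have hh₁meas : Measurable h₁ := (hmeas'.max measurable_const).min measurable_const
    have hg₁meas : Measurable g₁ := hmeas'.sub hh₁meas
    have hbound : ∀ x, |h₁ x| ≤ lam := by
      intro x
      rw [abs_le]
      exact ⟨le_min (le_max_right _ _) (by linarith), min_le_right _ _⟩
    have hMemh : MemLp h₁ ⊤ μ :=
      memLp_top_of_bound hh₁meas.aestronglyMeasurable lam
        (Filter.Eventually.of_forall fun x => by rw [Real.norm_eq_abs]; exact hbound x)
    have hnormh : (eLpNorm h₁ ⊤ μ).toReal ≤ lam := by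
      rw [eLpNorm_exponent_top]
      refine ENNReal.toReal_le_of_le_ofReal hlam0 ?_
      exact eLpNormEssSup_le_of_ae_bound
        (Filter.Eventually.of_forall fun x => by rw [Real.norm_eq_abs]; exact hbound x)
    have habs_g : ∀ x, |g₁ x| = max (|f' x| - lam) 0 := by
      intro x
      simp only [hg₁def, hh₁def]
      rcases le_total (f' x) (-lam) with hx | hx
      · rw [max_eq_right hx, min_eq_left (by linarith)]
        rw [abs_of_nonpos (by linarith), abs_of_nonpos (by linarith)]
        rw [max_eq_left (by linarith)]
        ring
      · rcases le_total lam (f' x) with hx2 | hx2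
        · rw [max_eq_left (by linarith), min_eq_right hx2]
          rw [abs_of_nonneg (by linarith), abs_of_nonneg (by linarith)]
          rw [max_eq_left (by linarith)]
        · rw [max_eq_left hx, min_eq_left hx2]
          rw [sub_self, abs_zero, max_eq_right]
          rw [sub_nonpos]
          exact abs_le.2 ⟨hx, hx2⟩
    have hfgh₁ : f =ᵐ[μ] g₁ + h₁ := by
      filter_upwards [hff'] with x hx
      simp only [Pi.add_apply, hg₁def]
      rw [hx]; ring
    have hantit : ∀ u, 0 < u → u ≤ t → lam ≤ rearr μ f u := fun u hu hut =>
      rearr_antitoneOn hnef (mem_Ioi.2 hu) (mem_Ioi.2 ht) hut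
    have hconst : ∫⁻ _ in Ioc (0:ℝ) t, ENNReal.ofReal lam
        = ENNReal.ofReal lam * ENNReal.ofReal t := by
      rw [setLIntegral_const, Real.volume_Ioc, sub_zero]
    have hconstle : ENNReal.ofReal lam * ENNReal.ofReal t ≤ A := by
      rw [← hconst, hAdef]
      apply lintegral_mono_ae
      rw [ae_restrict_iff' measurableSet_Ioc]
      exact Filter.Eventually.of_forall fun u hu =>
        ENNReal.ofReal_le_ofReal (hantit u hu.1 hu.2)
    -- evaluate the L¹ norm of g₁
    have hkey : eLpNorm g₁ 1 μ = A - ENNReal.ofReal lam * ENNReal.ofReal t := by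
      rw [← lintegral_abs_eq_eLpNorm g₁]
      have e1 : ∫⁻ x, ENNReal.ofReal |g₁ x| ∂μ
          = ∫⁻ x, ENNReal.ofReal (max (|f x| - lam) 0) ∂μ := by
        apply lintegral_congr_ae
        filter_upwards [hff'] with x hx
        rw [habs_g x, hx]
      rw [e1, ← lintegral_rearr_shift hmeas hnef hlam0]
      have hsplit : (Ioi (0:ℝ)) = Ioc (0:ℝ) t ∪ Ioi t := (Ioc_union_Ioi_eq_Ioi ht.le).symm
      rw [hsplit, lintegral_union measurableSet_Ioi Ioc_disjoint_Ioi_same]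
      have hzero : ∫⁻ u in Ioi t, ENNReal.ofReal (max (rearr μ f u - lam) 0) = 0 := by
        have hz : ∀ u ∈ Ioi t, ENNReal.ofReal (max (rearr μ f u - lam) 0) = (0:ℝ≥0∞) := by
          intro u hu
          rw [mem_Ioi] at hu
          have h1 : rearr μ f u ≤ lam :=
            rearr_antitoneOn hnef (mem_Ioi.2 ht) (mem_Ioi.2 (ht.trans hu)) hu.le
          rw [max_eq_right (by linarith), ENNReal.ofReal_zero]
        rw [setLIntegral_congr_fun measurableSet_Ioi hz,
          lintegral_zero]
      rw [hzero, add_zero]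
      have hcong : ∫⁻ u in Ioc (0:ℝ) t, ENNReal.ofReal (max (rearr μ f u - lam) 0)
          = ∫⁻ u in Ioc (0:ℝ) t, (ENNReal.ofReal (rearr μ f u) - ENNReal.ofReal lam) := by
        apply setLIntegral_congr_fun measurableSet_Ioc
        intro u hu
        have h1 : lam ≤ rearr μ f u := hantit u hu.1 hu.2
        beta_reduce
        rw [max_eq_left (by linarith), ENNReal.ofReal_sub _ hlam0]
      rw [hcong]
      rw [lintegral_sub measurable_const
        (by rw [hconst]; exact (ENNReal.mul_lt_top ENNReal.ofReal_lt_top ENNReal.ofReal_lt_top).ne)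
        (by rw [Filter.EventuallyLE, ae_restrict_iff' measurableSet_Ioc]
            exact Filter.Eventually.of_forall fun u hu =>
              ENNReal.ofReal_le_ofReal (hantit u hu.1 hu.2))]
      rw [hconst, hAdef]
    have hMemg : MemLp g₁ 1 μ :=
      ⟨hg₁meas.aestronglyMeasurable, by
        rw [hkey]; exact lt_of_le_of_lt tsub_le_self hAfin.lt_top⟩
    have hmem : (eLpNorm g₁ 1 μ).toReal + t * (eLpNorm h₁ ⊤ μ).toReal ∈
        {r | ∃ g h : α → ℝ, MemLp g 1 μ ∧ MemLp h ⊤ μ ∧ f =ᵐ[μ] g + h ∧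
          r = (eLpNorm g 1 μ).toReal + t * (eLpNorm h ⊤ μ).toReal} :=
      ⟨g₁, h₁, hMemg, hMemh, hfgh₁, rfl⟩
    refine le_trans (csInf_le hbdd hmem) ?_
    have e2 : (eLpNorm g₁ 1 μ).toReal = A.toReal - lam * t := by
      rw [hkey, ENNReal.toReal_sub_of_le hconstle hAfin, ENNReal.toReal_mul,
        ENNReal.toReal_ofReal hlam0, ENNReal.toReal_ofReal ht.le]
    have e3 : t * (eLpNorm h₁ ⊤ μ).toReal ≤ t * lam :=
      mul_le_mul_of_nonneg_left hnormh ht.le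
    rw [e2]
    linarith
  · -- lower bound
    refine le_csInf ⟨(eLpNorm g₀ 1 μ).toReal + t * (eLpNorm h₀ ⊤ μ).toReal,
      g₀, h₀, hg₀, hh₀, hfgh₀, rfl⟩ ?_
    rintro r ⟨g, h, hg, hh, hfgh, rfl⟩
    have hle := lintegral_rearr_Ioc_le hg hh hfgh ht
    have h1fin : eLpNorm g 1 μ ≠ ∞ := hg.2.ne
    have h2fin : ENNReal.ofReal t * eLpNorm h ⊤ μ ≠ ∞ :=
      (ENNReal.mul_lt_top ENNReal.ofReal_lt_top hh.2).ne
    have hfin : eLpNorm g 1 μ + ENNReal.ofReal t * eLpNorm h ⊤ μ ≠ ∞ := by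
      rw [ENNReal.add_ne_top]; exact ⟨h1fin, h2fin⟩
    have hmono := ENNReal.toReal_mono hfin hle
    rw [ENNReal.toReal_add h1fin h2fin, ENNReal.toReal_mul,
      ENNReal.toReal_ofReal ht.le] at hmono
    exact hmono
end

section
/- Let (Ω, μ) be a non-atomic σ-finite measure space and let f = (f_i) ∈ L₁(μ; ℓ₁) + L_∞(μ; ℓ_∞) (equivalently, a sequence of measurable functions). Then for every t > 0, K_t(f; L₁(μ; ℓ₁), L_∞(μ; ℓ_∞)) = sup { Σ_i K_{t_i}(f_i; L₁(μ), L_∞(μ)) : t_i ≥ 0, Σ_i t_i ≤ t }. -/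
open MeasureTheory ENNReal Set

/-- The `K_t`-functional of the couple `(L₁(μ; ℓ₁), L_∞(μ; ℓ_∞))` for a sequence
`f = (fᵢ)` of measurable functions. -/
noncomputable def KscSeq {α : Type*} [MeasurableSpace α] (μ : Measure α) (t : ℝ)
    (f : ℕ → α → ℝ) : ℝ :=
  sInf {r | ∃ g h : ℕ → α → ℝ, (∀ i, f i =ᵐ[μ] g i + h i) ∧
      (∀ i, AEMeasurable (g i) μ) ∧ (∀ i, AEMeasurable (h i) μ) ∧
      (∫⁻ ω, ∑' i, ‖g i ω‖₊ ∂μ) ≠ ∞ ∧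
      essSup (fun ω => ⨆ i, (‖h i ω‖₊ : ℝ≥0∞)) μ ≠ ∞ ∧
      r = (∫⁻ ω, ∑' i, ‖g i ω‖₊ ∂μ).toReal +
        t * (essSup (fun ω => ⨆ i, (‖h i ω‖₊ : ℝ≥0∞)) μ).toReal}

section Aux

variable {α : Type*} [MeasurableSpace α] {μ : Measure α}


lemma greedy (c : ℕ → ℝ≥0∞) (S : ℝ≥0∞) (h : S ≤ ∑' i, c i) :
    ∃ σ : ℕ → ℝ≥0∞, (∀ i, σ i ≤ c i) ∧ ∑' i, σ i = S := by
  classical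
  set C : ℕ → ℝ≥0∞ := fun n => ∑ i ∈ Finset.range n, c i with hC
  refine ⟨fun i => min (c i) (S - C i), fun i => min_le_left _ _, ?_⟩
  have key : ∀ n, ∑ i ∈ Finset.range n, min (c i) (S - C i) = min S (C n) := by
    intro n
    induction n with
    | zero => simp [hC]
    | succ n ih =>
      rw [Finset.sum_range_succ, ih]
      have hCsucc : C (n + 1) = C n + c n := by simp [hC, Finset.sum_range_succ]
      rcases le_or_gt S (C n) with hle | hlt
      · have h2 : S - C n = 0 := tsub_eq_zero_of_le hle
        have h3 : min S (C (n+1)) = S := min_eq_left (hle.trans (by rw [hCsucc]; exact le_self_add))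
        simp [min_eq_left hle, h2, h3]
      · rw [min_eq_right hlt.le, hCsucc]
        rcases le_or_gt (S - C n) (c n) with hle2 | hlt2
        · rw [min_eq_right hle2, add_tsub_cancel_of_le hlt.le, min_eq_left]
          exact tsub_le_iff_left.mp hle2
        · rw [min_eq_left hlt2.le, min_eq_right]
          rw [← add_tsub_cancel_of_le hlt.le]
          exact add_le_add_right hlt2.le _
  rw [ENNReal.tsum_eq_iSup_nat]
  simp_rw [key]
  rw [← @inf_iSup_eq ℝ≥0∞, ← ENNReal.tsum_eq_iSup_nat, inf_eq_left.mpr h]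


lemma kLower {f g h : α → ℝ} (hfgh : f =ᵐ[μ] g + h)
    {lam lam' : ℝ} (hlam' : 0 ≤ lam') (hll : lam' ≤ lam)
    {A B : Set α} (hA : MeasurableSet A) (hB : MeasurableSet B) (hAB : A ⊆ B)
    (hAf : ∀ x ∈ A, lam < |f x|)
    (hBf : ∀ x ∈ B, lam' < |f x|)
    (hAfin : μ A ≠ ∞) {σ : ℝ≥0∞} (hσ : μ A + σ ≤ μ B) :
    (∫⁻ x in A, ((‖f x‖₊ : ℝ≥0∞) - ENNReal.ofReal lam) ∂μ) + ENNReal.ofReal lam * μ A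
      + ENNReal.ofReal lam' * σ ≤ (∫⁻ x, (‖g x‖₊ : ℝ≥0∞) ∂μ) + (μ A + σ) * eLpNormEssSup h μ := by
  set β := eLpNormEssSup h μ with hβ
  -- a.e. bound ‖f x‖₊ ≤ ‖g x‖₊ + β
  have haefg : ∀ᵐ x ∂μ, (‖f x‖₊ : ℝ≥0∞) ≤ (‖g x‖₊ : ℝ≥0∞) + β := by
    filter_upwards [hfgh, ae_le_eLpNormEssSup (f := h) (μ := μ)] with x hx hhx
    have : |f x| ≤ |g x| + |h x| := by rw [hx]; exact abs_add_le _ _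
    calc (‖f x‖₊ : ℝ≥0∞) = ENNReal.ofReal |f x| := by
          simp [← enorm_eq_nnnorm, Real.enorm_eq_ofReal_abs]
      _ ≤ ENNReal.ofReal (|g x| + |h x|) := ENNReal.ofReal_le_ofReal this
      _ = ENNReal.ofReal |g x| + ENNReal.ofReal |h x| := ENNReal.ofReal_add (abs_nonneg _) (abs_nonneg _)
      _ ≤ (‖g x‖₊ : ℝ≥0∞) + β := by
          gcongr
          · simp [← enorm_eq_nnnorm, Real.enorm_eq_ofReal_abs]
          · calc ENNReal.ofReal |h x| = (‖h x‖₊ : ℝ≥0∞) := by simp [← enorm_eq_nnnorm, Real.enorm_eq_ofReal_abs]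
              _ ≤ β := hhx
  rcases eq_top_or_lt_top β with hβtop | hβfin
  · rcases eq_or_ne (μ A + σ) 0 with h0 | h0
    · have hμA : μ A = 0 := by simpa using (add_eq_zero.mp h0).1
      have hσ0 : σ = 0 := (add_eq_zero.mp h0).2
      rw [hμA, hσ0]
      simp [Measure.restrict_eq_zero.mpr hμA]
    · rw [hβtop, ENNReal.mul_top h0]
      simp
  have hβne : β ≠ ∞ := hβfin.ne
  have hfA : ∀ᵐ x ∂μ, x ∈ A → ENNReal.ofReal lam ≤ (‖f x‖₊ : ℝ≥0∞) := by
    refine ae_of_all _ fun x hxA => ?_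
    rw [← enorm_eq_nnnorm, Real.enorm_eq_ofReal_abs]
    exact ENNReal.ofReal_le_ofReal (hAf x hxA).le
  have hμAβ : μ A * β ≠ ∞ := ENNReal.mul_ne_top hAfin hβne
  rcases le_or_gt β (ENNReal.ofReal lam) with hc | hc
  · -- β ≤ λ
    -- σ ≤ μ (B \ A)
    have hσBA : σ ≤ μ (B \ A) := by
      have hBle : μ B ≤ μ A + μ (B \ A) := by
        calc μ B = μ (A ∪ B \ A) := by rw [union_diff_cancel hAB]
          _ ≤ μ A + μ (B \ A) := measure_union_le _ _
      exact (ENNReal.add_le_add_iff_left hAfin).mp (hσ.trans hBle)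
    have hgBA : (ENNReal.ofReal lam' - β) * σ ≤ ∫⁻ x in B \ A, (‖g x‖₊ : ℝ≥0∞) ∂μ := by
      have h1 : (ENNReal.ofReal lam' - β) * σ ≤ (ENNReal.ofReal lam' - β) * μ (B \ A) := by gcongr
      refine h1.trans ?_
      rw [← setLIntegral_const (B \ A) (ENNReal.ofReal lam' - β)]
      refine lintegral_mono_ae ?_
      rw [ae_restrict_iff' (hB.diff hA)]
      filter_upwards [haefg] with x hx hxBA
      have h1 : ENNReal.ofReal lam' ≤ (‖f x‖₊ : ℝ≥0∞) := by
        rw [← enorm_eq_nnnorm, Real.enorm_eq_ofReal_abs]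
        exact ENNReal.ofReal_le_ofReal (hBf x hxBA.1).le
      exact tsub_le_iff_right.mpr (h1.trans hx)
    have hAae : (∫⁻ x in A, ((‖f x‖₊ : ℝ≥0∞) - ENNReal.ofReal lam) ∂μ)
        + (ENNReal.ofReal lam - β) * μ A ≤ ∫⁻ x in A, (‖g x‖₊ : ℝ≥0∞) ∂μ := by
      have := lintegral_add_right (μ := μ.restrict A)
        (f := fun x => (‖f x‖₊ : ℝ≥0∞) - ENNReal.ofReal lam)
        (g := fun _ => ENNReal.ofReal lam - β) measurable_const
      rw [setLIntegral_const] at this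
      rw [← this]
      refine lintegral_mono_ae ?_
      rw [ae_restrict_iff' hA]
      filter_upwards [haefg] with x hx hxA
      have hlf : ENNReal.ofReal lam ≤ (‖f x‖₊ : ℝ≥0∞) := by
        rw [← enorm_eq_nnnorm, Real.enorm_eq_ofReal_abs]
        exact ENNReal.ofReal_le_ofReal (hAf x hxA).le
      rw [tsub_add_tsub_cancel hlf hc]
      exact tsub_le_iff_right.mpr hx
    have hsplit : (∫⁻ x in A, (‖g x‖₊ : ℝ≥0∞) ∂μ) + (∫⁻ x in B \ A, (‖g x‖₊ : ℝ≥0∞) ∂μ)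
        ≤ ∫⁻ x, (‖g x‖₊ : ℝ≥0∞) ∂μ := by
      rw [← lintegral_union (hB.diff hA) disjoint_sdiff_right]
      exact setLIntegral_le_lintegral _ _
    have e1 : ENNReal.ofReal lam * μ A = (ENNReal.ofReal lam - β) * μ A + β * μ A := by
      rw [← add_mul, tsub_add_cancel_of_le hc]
    have e2 : ENNReal.ofReal lam' * σ ≤ (ENNReal.ofReal lam' - β) * σ + β * σ := by
      rw [← add_mul]; gcongr; exact le_tsub_add
    calc (∫⁻ x in A, ((‖f x‖₊ : ℝ≥0∞) - ENNReal.ofReal lam) ∂μ) + ENNReal.ofReal lam * μ A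
          + ENNReal.ofReal lam' * σ
        ≤ ((∫⁻ x in A, ((‖f x‖₊ : ℝ≥0∞) - ENNReal.ofReal lam) ∂μ)
            + (ENNReal.ofReal lam - β) * μ A) + (β * μ A
            + ((ENNReal.ofReal lam' - β) * σ + β * σ)) := by
          rw [e1]
          refine le_of_le_of_eq (add_le_add_right e2 _) ?_
          ring
      _ ≤ (∫⁻ x in A, (‖g x‖₊ : ℝ≥0∞) ∂μ) + (β * μ A
            + ((ENNReal.ofReal lam' - β) * σ + β * σ)) := add_le_add_left hAae _
      _ = ((∫⁻ x in A, (‖g x‖₊ : ℝ≥0∞) ∂μ) + (ENNReal.ofReal lam' - β) * σ)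
            + (μ A + σ) * β := by ring
      _ ≤ ((∫⁻ x in A, (‖g x‖₊ : ℝ≥0∞) ∂μ) + (∫⁻ x in B \ A, (‖g x‖₊ : ℝ≥0∞) ∂μ))
            + (μ A + σ) * β := add_le_add_left (add_le_add_right hgBA _) _
      _ ≤ (∫⁻ x, (‖g x‖₊ : ℝ≥0∞) ∂μ) + (μ A + σ) * β := add_le_add_left hsplit _
  · -- λ < β
    have hstep : (∫⁻ x in A, ((‖f x‖₊ : ℝ≥0∞) - ENNReal.ofReal lam) ∂μ)
        ≤ (∫⁻ x in A, (‖g x‖₊ : ℝ≥0∞) ∂μ) + (β - ENNReal.ofReal lam) * μ A := by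
      have := lintegral_add_right (μ := μ.restrict A)
        (f := fun x => (‖g x‖₊ : ℝ≥0∞))
        (g := fun _ => β - ENNReal.ofReal lam) measurable_const
      rw [setLIntegral_const] at this
      rw [← this]
      refine lintegral_mono_ae ?_
      rw [ae_restrict_iff' hA]
      filter_upwards [haefg] with x hx _
      refine tsub_le_iff_right.mpr (hx.trans ?_)
      rw [add_assoc, tsub_add_cancel_of_le hc.le]
    calc (∫⁻ x in A, ((‖f x‖₊ : ℝ≥0∞) - ENNReal.ofReal lam) ∂μ) + ENNReal.ofReal lam * μ A
          + ENNReal.ofReal lam' * σ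
        ≤ ((∫⁻ x in A, (‖g x‖₊ : ℝ≥0∞) ∂μ) + (β - ENNReal.ofReal lam) * μ A)
            + ENNReal.ofReal lam * μ A + β * σ := by
          gcongr
          calc ENNReal.ofReal lam' ≤ ENNReal.ofReal lam := ENNReal.ofReal_le_ofReal hll
            _ ≤ β := hc.le
      _ = (∫⁻ x in A, (‖g x‖₊ : ℝ≥0∞) ∂μ) + ((β - ENNReal.ofReal lam) + ENNReal.ofReal lam) * μ A
            + β * σ := by ring
      _ = (∫⁻ x in A, (‖g x‖₊ : ℝ≥0∞) ∂μ) + β * μ A + β * σ := by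
          rw [tsub_add_cancel_of_le hc.le]
      _ = (∫⁻ x in A, (‖g x‖₊ : ℝ≥0∞) ∂μ) + (μ A + σ) * β := by ring
      _ ≤ (∫⁻ x, (‖g x‖₊ : ℝ≥0∞) ∂μ) + (μ A + σ) * β :=
          add_le_add_left (setLIntegral_le_lintegral _ _) _

-- pointwise truncation lemma
lemma truncAbs (lam a : ℝ) (hlam : 0 ≤ lam) :
    (‖a - max (min a lam) (-lam)‖₊ : ℝ≥0∞) = (‖a‖₊ : ℝ≥0∞) - ENNReal.ofReal lam ∧
      |max (min a lam) (-lam)| ≤ lam := by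
  constructor
  · have : |a - max (min a lam) (-lam)| = |a| - lam ∨ (|a| ≤ lam ∧ a - max (min a lam) (-lam) = 0) := by
      rcases le_or_gt a (-lam) with h1 | h1
      · left
        rw [max_eq_right (le_trans (min_le_left _ _) h1), abs_of_nonpos (by linarith),
          abs_of_nonpos (by linarith)]
        ring
      rcases le_or_gt lam a with h2 | h2
      · left
        rw [min_eq_right h2, max_eq_left (by linarith), abs_of_nonneg (by linarith),
          abs_of_nonneg (by linarith)]
      · right
        constructor
        · rw [abs_le]; constructor <;> linarith
        · rw [min_eq_left h2.le, max_eq_left h1.le]; ring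
    rcases this with h | ⟨h1, h2⟩
    · rw [← enorm_eq_nnnorm, Real.enorm_eq_ofReal_abs, h, ENNReal.ofReal_sub _ hlam, ← enorm_eq_nnnorm, Real.enorm_eq_ofReal_abs]
    · rw [h2]
      symm
      rw [nnnorm_zero]
      simp only [ENNReal.coe_zero]
      rw [tsub_eq_zero_of_le]
      rw [← enorm_eq_nnnorm, Real.enorm_eq_ofReal_abs]
      exact ENNReal.ofReal_le_ofReal h1
  · rw [abs_le]
    constructor
    · exact le_max_right _ _
    · exact max_le (le_trans (min_le_right _ _) le_rfl) (by linarith)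


-- basic facts about the Ksc set
lemma KscSet_nonneg {t : ℝ} (ht : 0 ≤ t) {f : α → ℝ} :
    ∀ r ∈ {r | ∃ g h : α → ℝ, MemLp g 1 μ ∧ MemLp h ⊤ μ ∧ f =ᵐ[μ] g + h ∧
      r = (eLpNorm g 1 μ).toReal + t * (eLpNorm h ⊤ μ).toReal}, (0:ℝ) ≤ r := by
  rintro r ⟨g, h, _, _, _, rfl⟩
  positivity

lemma Ksc_le {t : ℝ} (ht : 0 ≤ t) {f g h : α → ℝ} (hg : MemLp g 1 μ) (hh : MemLp h ⊤ μ)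
    (hfgh : f =ᵐ[μ] g + h) :
    Ksc μ t f ≤ (eLpNorm g 1 μ).toReal + t * (eLpNorm h ⊤ μ).toReal :=
  csInf_le ⟨0, KscSet_nonneg ht⟩ ⟨g, h, hg, hh, hfgh, rfl⟩

lemma Ksc_nonneg {t : ℝ} (ht : 0 ≤ t) {f g h : α → ℝ} (hg : MemLp g 1 μ) (hh : MemLp h ⊤ μ)
    (hfgh : f =ᵐ[μ] g + h) : 0 ≤ Ksc μ t f :=
  le_csInf ⟨_, ⟨g, h, hg, hh, hfgh, rfl⟩⟩ (KscSet_nonneg ht)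

lemma le_Ksc {t b : ℝ} {f g h : α → ℝ} (hg : MemLp g 1 μ) (hh : MemLp h ⊤ μ)
    (hfgh : f =ᵐ[μ] g + h)
    (hlb : ∀ r ∈ {r | ∃ g h : α → ℝ, MemLp g 1 μ ∧ MemLp h ⊤ μ ∧ f =ᵐ[μ] g + h ∧
      r = (eLpNorm g 1 μ).toReal + t * (eLpNorm h ⊤ μ).toReal}, b ≤ r) :
    b ≤ Ksc μ t f :=
  le_csInf ⟨_, ⟨g, h, hg, hh, hfgh, rfl⟩⟩ hlb

end Aux

/-- For a non-atomic σ-finite measure space,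
`K_t(f; L₁(μ; ℓ₁), L_∞(μ; ℓ_∞)) = sup { Σᵢ K_{tᵢ}(fᵢ; L₁(μ), L_∞(μ)) : tᵢ ≥ 0, Σ tᵢ ≤ t }`. -/
theorem KscSeq_eq_sSup {α : Type*} [MeasurableSpace α] (μ : Measure α)
    [SigmaFinite μ] [NullSingletonClass μ]
    (f : ℕ → α → ℝ) (hmeas : ∀ i, AEMeasurable (f i) μ)
    (hf : ∃ g h : ℕ → α → ℝ, (∀ i, f i =ᵐ[μ] g i + h i) ∧
      (∀ i, AEMeasurable (g i) μ) ∧ (∀ i, AEMeasurable (h i) μ) ∧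
      (∫⁻ ω, ∑' i, ‖g i ω‖₊ ∂μ) ≠ ∞ ∧
      essSup (fun ω => ⨆ i, (‖h i ω‖₊ : ℝ≥0∞)) μ ≠ ∞)
    (t : ℝ) (ht : 0 < t) :
    KscSeq μ t f =
      sSup {s | ∃ τ : ℕ → ℝ, (∀ i, 0 ≤ τ i) ∧ Summable τ ∧ (∑' i, τ i) ≤ t ∧
        Summable (fun i => Ksc μ (τ i) (f i)) ∧ s = ∑' i, Ksc μ (τ i) (f i)} := by
  classical
  obtain ⟨g0, h0, hfd, hg0m, hh0m, hGne, hMne⟩ := hf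
  set RHS : Set ℝ := {s | ∃ τ : ℕ → ℝ, (∀ i, 0 ≤ τ i) ∧ Summable τ ∧ (∑' i, τ i) ≤ t ∧
        Summable (fun i => Ksc μ (τ i) (f i)) ∧ s = ∑' i, Ksc μ (τ i) (f i)} with hRHSdef
  set KSet : Set ℝ := {r | ∃ g h : ℕ → α → ℝ, (∀ i, f i =ᵐ[μ] g i + h i) ∧
      (∀ i, AEMeasurable (g i) μ) ∧ (∀ i, AEMeasurable (h i) μ) ∧
      (∫⁻ ω, ∑' i, ‖g i ω‖₊ ∂μ) ≠ ∞ ∧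
      essSup (fun ω => ⨆ i, (‖h i ω‖₊ : ℝ≥0∞)) μ ≠ ∞ ∧
      r = (∫⁻ ω, ∑' i, ‖g i ω‖₊ ∂μ).toReal +
        t * (essSup (fun ω => ⨆ i, (‖h i ω‖₊ : ℝ≥0∞)) μ).toReal} with hKSetdef
  have hKscSeq : KscSeq μ t f = sInf KSet := rfl
  have hKSet_ne : KSet.Nonempty := ⟨_, g0, h0, hfd, hg0m, hh0m, hGne, hMne, rfl⟩
  have hKSet_nonneg : ∀ r ∈ KSet, (0:ℝ) ≤ r := by
    rintro r ⟨g, h, _, _, _, _, _, rfl⟩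
    have := ht.le
    positivity
  -- the easy direction: every element of RHS is ≤ every element of KSet
  have heasy : ∀ s ∈ RHS, ∀ r ∈ KSet, s ≤ r := by
    rintro s ⟨τ, hτ0, hτsum, hτle, hKsum, rfl⟩ r ⟨g, h, hd, hgm, hhm, hGne', hMne', rfl⟩
    set M' := essSup (fun ω => ⨆ i, (‖h i ω‖₊ : ℝ≥0∞)) μ with hM'def
    have hswap : (∫⁻ ω, ∑' i, (‖g i ω‖₊ : ℝ≥0∞) ∂μ) = ∑' i, ∫⁻ ω, (‖g i ω‖₊ : ℝ≥0∞) ∂μ :=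
      lintegral_tsum fun i => (hgm i).enorm
    have hGi : ∀ i, (∫⁻ ω, (‖g i ω‖₊ : ℝ≥0∞) ∂μ) ≠ ∞ := fun i =>
      ne_top_of_le_ne_top (hswap ▸ hGne') (ENNReal.le_tsum i)
    have hMi : ∀ i, eLpNorm (h i) ⊤ μ ≤ M' := by
      intro i
      rw [eLpNorm_exponent_top]
      exact essSup_mono_ae (ae_of_all _ fun x => le_iSup (fun j => (‖h j x‖₊ : ℝ≥0∞)) i)
    have hMg : ∀ i, MemLp (g i) 1 μ := fun i => ⟨(hgm i).aestronglyMeasurable, by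
      rw [eLpNorm_one_eq_lintegral_enorm]; exact (hGi i).lt_top⟩
    have hMh : ∀ i, MemLp (h i) ⊤ μ := fun i =>
      ⟨(hhm i).aestronglyMeasurable, (hMi i).trans_lt hMne'.lt_top⟩
    set u : ℕ → ℝ := fun i => (∫⁻ ω, (‖g i ω‖₊ : ℝ≥0∞) ∂μ).toReal + τ i * M'.toReal with hudef
    have hKle : ∀ i, Ksc μ (τ i) (f i) ≤ u i := by
      intro i
      refine (Ksc_le (hτ0 i) (hMg i) (hMh i) (hd i)).trans ?_
      rw [hudef, eLpNorm_one_eq_lintegral_enorm]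
      exact add_le_add le_rfl
        (mul_le_mul_of_nonneg_left (ENNReal.toReal_mono hMne' (hMi i)) (hτ0 i))
    have husum1 : Summable (fun i => (∫⁻ ω, (‖g i ω‖₊ : ℝ≥0∞) ∂μ).toReal) :=
      ENNReal.summable_toReal (hswap ▸ hGne')
    have husum : Summable u := husum1.add (hτsum.mul_right M'.toReal)
    calc ∑' i, Ksc μ (τ i) (f i) ≤ ∑' i, u i := Summable.tsum_le_tsum hKle hKsum husum
      _ = (∑' i, (∫⁻ ω, (‖g i ω‖₊ : ℝ≥0∞) ∂μ).toReal) + (∑' i, τ i) * M'.toReal := by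
          rw [hudef, Summable.tsum_add husum1 (hτsum.mul_right _), tsum_mul_right]
      _ ≤ (∫⁻ ω, ∑' i, (‖g i ω‖₊ : ℝ≥0∞) ∂μ).toReal + t * M'.toReal := by
          refine add_le_add (le_of_eq ?_) (mul_le_mul_of_nonneg_right hτle ENNReal.toReal_nonneg)
          rw [hswap, ENNReal.tsum_toReal_eq hGi]
  have hRHS_ne : RHS.Nonempty := by
    have hswap : (∫⁻ ω, ∑' i, (‖g0 i ω‖₊ : ℝ≥0∞) ∂μ) = ∑' i, ∫⁻ ω, (‖g0 i ω‖₊ : ℝ≥0∞) ∂μ :=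
      lintegral_tsum fun i => (hg0m i).enorm
    have hGi : ∀ i, (∫⁻ ω, (‖g0 i ω‖₊ : ℝ≥0∞) ∂μ) ≠ ∞ := fun i =>
      ne_top_of_le_ne_top (hswap ▸ hGne) (ENNReal.le_tsum i)
    have hMi : ∀ i, eLpNorm (h0 i) ⊤ μ ≤ essSup (fun ω => ⨆ i, (‖h0 i ω‖₊ : ℝ≥0∞)) μ := by
      intro i
      rw [eLpNorm_exponent_top]
      exact essSup_mono_ae (ae_of_all _ fun x => le_iSup (fun j => (‖h0 j x‖₊ : ℝ≥0∞)) i)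
    have hMg : ∀ i, MemLp (g0 i) 1 μ := fun i => ⟨(hg0m i).aestronglyMeasurable, by
      rw [eLpNorm_one_eq_lintegral_enorm]; exact (hGi i).lt_top⟩
    have hMh : ∀ i, MemLp (h0 i) ⊤ μ := fun i =>
      ⟨(hh0m i).aestronglyMeasurable, (hMi i).trans_lt hMne.lt_top⟩
    refine ⟨∑' i, Ksc μ ((fun _ => (0:ℝ)) i) (f i), (fun _ => 0), fun i => le_rfl,
      summable_zero, by simp [ht.le], ?_, rfl⟩
    refine Summable.of_nonneg_of_le (fun i => Ksc_nonneg le_rfl (hMg i) (hMh i) (hfd i)) ?_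
      (ENNReal.summable_toReal (hswap ▸ hGne))
    intro i
    refine (Ksc_le le_rfl (hMg i) (hMh i) (hfd i)).trans ?_
    rw [eLpNorm_one_eq_lintegral_enorm]
    simp
    exact le_rfl
  have hRHS_bdd : BddAbove RHS := by
    obtain ⟨r, hr⟩ := hKSet_ne
    exact ⟨r, fun s hs => heasy s hs r hr⟩
  -- first inequality
  have h1 : sSup RHS ≤ KscSeq μ t f := by
    rw [hKscSeq]
    exact csSup_le hRHS_ne fun s hs => le_csInf hKSet_ne (heasy s hs)
  -- now the hard direction
  refine le_antisymm ?_ h1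
  -- ============ hard direction ============
  -- measurable representatives
  set f' : ℕ → α → ℝ := fun i => (hmeas i).mk (f i) with hf'def
  have hf'meas : ∀ i, Measurable (f' i) := fun i => (hmeas i).measurable_mk
  have hff' : ∀ i, f i =ᵐ[μ] f' i := fun i => (hmeas i).ae_eq_mk
  have hfd' : ∀ i, f' i =ᵐ[μ] g0 i + h0 i := fun i => (hff' i).symm.trans (hfd i)
  set M := essSup (fun ω => ⨆ i, (‖h0 i ω‖₊ : ℝ≥0∞)) μ with hMdef
  set G := ∫⁻ ω, ∑' i, (‖g0 i ω‖₊ : ℝ≥0∞) ∂μ with hGdef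
  have hswap0 : G = ∑' i, ∫⁻ ω, (‖g0 i ω‖₊ : ℝ≥0∞) ∂μ :=
    lintegral_tsum fun i => (hg0m i).enorm
  have hGi0 : ∀ i, (∫⁻ ω, (‖g0 i ω‖₊ : ℝ≥0∞) ∂μ) ≠ ∞ := fun i =>
    ne_top_of_le_ne_top (hswap0 ▸ hGne) (ENNReal.le_tsum i)
  have hMi0 : ∀ i, eLpNorm (h0 i) ⊤ μ ≤ M := by
    intro i
    rw [eLpNorm_exponent_top]
    exact essSup_mono_ae (ae_of_all _ fun x => le_iSup (fun j => (‖h0 j x‖₊ : ℝ≥0∞)) i)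
  have hMg0 : ∀ i, MemLp (g0 i) 1 μ := fun i => ⟨(hg0m i).aestronglyMeasurable, by
    rw [eLpNorm_one_eq_lintegral_enorm]; exact (hGi0 i).lt_top⟩
  have hMh0 : ∀ i, MemLp (h0 i) ⊤ μ := fun i =>
    ⟨(hh0m i).aestronglyMeasurable, (hMi0 i).trans_lt hMne.lt_top⟩
  -- a.e. domination of f'
  have hbound : ∀ i, ∀ᵐ x ∂μ, (‖f' i x‖₊ : ℝ≥0∞) ≤ (‖g0 i x‖₊ : ℝ≥0∞) + M := by
    intro i
    filter_upwards [hfd' i, _root_.ae_le_essSup (f := fun ω => ⨆ i, (‖h0 i ω‖₊ : ℝ≥0∞)) (μ := μ)]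
      with x hx hsup
    have h1 : |f' i x| ≤ |g0 i x| + |h0 i x| := by rw [hx]; exact abs_add_le _ _
    calc (‖f' i x‖₊ : ℝ≥0∞) = ENNReal.ofReal |f' i x| := by simp [← enorm_eq_nnnorm, Real.enorm_eq_ofReal_abs]
      _ ≤ ENNReal.ofReal (|g0 i x| + |h0 i x|) := ENNReal.ofReal_le_ofReal h1
      _ = ENNReal.ofReal |g0 i x| + ENNReal.ofReal |h0 i x| :=
          ENNReal.ofReal_add (abs_nonneg _) (abs_nonneg _)
      _ ≤ (‖g0 i x‖₊ : ℝ≥0∞) + M := by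
          refine add_le_add (le_of_eq (by simp [← enorm_eq_nnnorm, Real.enorm_eq_ofReal_abs])) ?_
          calc ENNReal.ofReal |h0 i x| = (‖h0 i x‖₊ : ℝ≥0∞) := by
                simp [← enorm_eq_nnnorm, Real.enorm_eq_ofReal_abs]
            _ ≤ ⨆ j, (‖h0 j x‖₊ : ℝ≥0∞) := le_iSup (fun j => (‖h0 j x‖₊ : ℝ≥0∞)) i
            _ ≤ M := hsup
  -- the distribution function
  set D : ℝ → ℝ≥0∞ := fun l => ∑' i, μ {x | l < |f' i x|} with hDdef
  have hDanti : ∀ {l l' : ℝ}, l ≤ l' → D l' ≤ D l := by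
    intro l l' hll
    exact ENNReal.tsum_le_tsum fun i => measure_mono fun x hx => lt_of_le_of_lt hll hx
  set LSet : Set ℝ := {l | 0 ≤ l ∧ D l ≤ ENNReal.ofReal t} with hLSetdef
  have hLbdd : BddBelow LSet := ⟨0, fun l hl => hl.1⟩
  have hLne : LSet.Nonempty := by
    set c : ℝ := G.toReal / t + 1 with hcdef
    have hc0 : 0 < c := by positivity
    refine ⟨M.toReal + c, by positivity, ?_⟩
    have hsub : ∀ i, μ {x | M.toReal + c < |f' i x|} ≤ μ {x | ENNReal.ofReal c ≤ (‖g0 i x‖₊ : ℝ≥0∞)} := by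
      intro i
      refine measure_mono_ae ?_
      filter_upwards [hbound i] with x hx hmem
      have h1 : ENNReal.ofReal (M.toReal + c) ≤ (‖f' i x‖₊ : ℝ≥0∞) := by
        rw [← enorm_eq_nnnorm, Real.enorm_eq_ofReal_abs]
        exact ENNReal.ofReal_le_ofReal hmem.le
      rw [ENNReal.ofReal_add ENNReal.toReal_nonneg hc0.le, ENNReal.ofReal_toReal hMne] at h1
      have h2 : M + ENNReal.ofReal c ≤ (‖g0 i x‖₊ : ℝ≥0∞) + M := h1.trans (hx.trans le_rfl)
      rw [add_comm M (ENNReal.ofReal c)] at h2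
      exact (ENNReal.add_le_add_iff_right hMne).mp h2
    by_contra hcon
    push_neg at hcon
    have hkey : ENNReal.ofReal c * D (M.toReal + c) ≤ G := by
      rw [hDdef]
      simp only
      rw [← ENNReal.tsum_mul_left, hswap0]
      refine ENNReal.tsum_le_tsum fun i => ?_
      calc ENNReal.ofReal c * μ {x | M.toReal + c < |f' i x|}
          ≤ ENNReal.ofReal c * μ {x | ENNReal.ofReal c ≤ (‖g0 i x‖₊ : ℝ≥0∞)} :=
            mul_le_mul_right (hsub i) _
        _ ≤ ∫⁻ ω, (‖g0 i ω‖₊ : ℝ≥0∞) ∂μ := mul_meas_ge_le_lintegral₀ (hg0m i).enorm _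
    have hlt : G < ENNReal.ofReal c * ENNReal.ofReal t := by
      rw [← ENNReal.ofReal_mul hc0.le, ← ENNReal.ofReal_toReal hGne]
      refine ENNReal.ofReal_lt_ofReal_iff (by positivity) |>.mpr ?_
      calc G.toReal < G.toReal + t := by linarith
        _ ≤ c * t := le_of_eq (by rw [hcdef, add_mul, div_mul_cancel₀ _ ht.ne', one_mul])
    have : ENNReal.ofReal c * ENNReal.ofReal t ≤ ENNReal.ofReal c * D (M.toReal + c) :=
      mul_le_mul_right hcon.le _
    exact absurd ((this.trans hkey)) hlt.not_ge
  set lam := sInf LSet with hlamdef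
  have hlam0 : 0 ≤ lam := le_csInf hLne fun l hl => hl.1
  have hDgt : ∀ l, lam < l → D l ≤ ENNReal.ofReal t := by
    intro l hl
    obtain ⟨l', hl'mem, hl'lt⟩ := (csInf_lt_iff hLbdd hLne).mp hl
    exact (hDanti hl'lt.le).trans hl'mem.2
  have hDlam : D lam ≤ ENNReal.ofReal t := by
    have hun : ∀ i, {x | lam < |f' i x|} = ⋃ n : ℕ, {x | lam + 1/(n+1) < |f' i x|} := by
      intro i
      ext x
      simp only [mem_setOf_eq, mem_iUnion]
      constructor
      · intro hx
        obtain ⟨n, hn⟩ := exists_nat_one_div_lt (sub_pos.mpr hx)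
        exact ⟨n, by push_cast at hn ⊢; linarith⟩
      · rintro ⟨n, hn⟩
        have : (0:ℝ) < 1/(n+1) := by positivity
        linarith
    have hmono : ∀ i, Monotone fun n : ℕ => {x | lam + 1/(n+1) < |f' i x|} := by
      intro i n m hnm x hx
      simp only [mem_setOf_eq] at hx ⊢
      have h1 : (1:ℝ)/(m+1) ≤ 1/(n+1) := by
        apply one_div_le_one_div_of_le (by positivity)
        have := (Nat.cast_le (α := ℝ)).mpr hnm
        linarith
      linarith
    have hμun : ∀ i, μ {x | lam < |f' i x|} = ⨆ n : ℕ, μ {x | lam + 1/(n+1) < |f' i x|} := by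
      intro i
      rw [hun i]
      exact (hmono i).directed_le.measure_iUnion
    rw [hDdef]
    simp only
    rw [tsum_congr hμun, ENNReal.tsum_eq_iSup_sum]
    refine iSup_le fun F => ?_
    rw [ENNReal.finsetSum_iSup_of_monotone (fun i => (fun _ _ h => measure_mono (hmono i h)))]
    refine iSup_le fun n => ?_
    calc ∑ i ∈ F, μ {x | lam + 1/(n+1) < |f' i x|}
        ≤ ∑' i, μ {x | lam + 1/(n+1) < |f' i x|} := ENNReal.sum_le_tsum F
      _ = D (lam + 1/(n+1)) := rfl
      _ ≤ ENNReal.ofReal t := hDgt _ (by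
          have : (0:ℝ) < 1/(n+1) := by positivity
          linarith)
  set A : ℕ → Set α := fun i => {x | lam < |f' i x|} with hAdef
  have hAmeas : ∀ i, MeasurableSet (A i) :=
    fun i => measurableSet_lt measurable_const (hf'meas i).abs
  have hDlamA : D lam = ∑' i, μ (A i) := rfl
  have hμAD : ∀ i, μ (A i) ≤ D lam := by
    intro i
    rw [hDlamA]
    exact ENNReal.le_tsum i
  have hμA_fin : ∀ i, μ (A i) ≠ ∞ := fun i =>
    ne_top_of_le_ne_top (ne_top_of_le_ne_top ENNReal.ofReal_ne_top hDlam) (hμAD i)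
  set EL : ℕ → ℝ≥0∞ := fun i => ∫⁻ x, ((‖f' i x‖₊ : ℝ≥0∞) - ENNReal.ofReal lam) ∂μ with hELdef
  have hELA : ∀ i, EL i = ∫⁻ x in A i, ((‖f' i x‖₊ : ℝ≥0∞) - ENNReal.ofReal lam) ∂μ := by
    intro i
    rw [hELdef]
    simp only
    rw [← lintegral_add_compl (μ := μ) (fun x => ((‖f' i x‖₊ : ℝ≥0∞) - ENNReal.ofReal lam)) (hAmeas i)]
    have hz : ∫⁻ x in (A i)ᶜ, ((‖f' i x‖₊ : ℝ≥0∞) - ENNReal.ofReal lam) ∂μ = 0 := by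
      have h0 : ∀ᵐ x ∂μ.restrict (A i)ᶜ, ((‖f' i x‖₊ : ℝ≥0∞) - ENNReal.ofReal lam) = 0 := by
        rw [ae_restrict_iff' (hAmeas i).compl]
        refine ae_of_all _ fun x hx => ?_
        have hle : |f' i x| ≤ lam := not_lt.mp hx
        refine tsub_eq_zero_of_le ?_
        rw [← enorm_eq_nnnorm, Real.enorm_eq_ofReal_abs]
        exact ENNReal.ofReal_le_ofReal hle
      rw [lintegral_congr_ae h0, lintegral_zero]
    rw [hz, add_zero]
  have hELle : ∀ i, EL i ≤ (∫⁻ ω, (‖g0 i ω‖₊ : ℝ≥0∞) ∂μ) + (M - ENNReal.ofReal lam) * μ (A i) := by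
    intro i
    rw [hELA i]
    have hadd := lintegral_add_right (μ := μ.restrict (A i)) (f := fun x => (‖g0 i x‖₊ : ℝ≥0∞))
      (g := fun _ => M - ENNReal.ofReal lam) measurable_const
    rw [setLIntegral_const] at hadd
    calc ∫⁻ x in A i, ((‖f' i x‖₊ : ℝ≥0∞) - ENNReal.ofReal lam) ∂μ
        ≤ ∫⁻ x in A i, ((‖g0 i x‖₊ : ℝ≥0∞) + (M - ENNReal.ofReal lam)) ∂μ := by
          refine lintegral_mono_ae ?_
          rw [ae_restrict_iff' (hAmeas i)]
          filter_upwards [hbound i] with x hx _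
          refine tsub_le_iff_right.mpr (hx.trans ?_)
          rw [add_assoc]
          exact add_le_add_right le_tsub_add _
      _ = (∫⁻ x in A i, (‖g0 i x‖₊ : ℝ≥0∞) ∂μ) + (M - ENNReal.ofReal lam) * μ (A i) := hadd
      _ ≤ (∫⁻ ω, (‖g0 i ω‖₊ : ℝ≥0∞) ∂μ) + (M - ENNReal.ofReal lam) * μ (A i) :=
          add_le_add_left (setLIntegral_le_lintegral _ _) _
  have hELfin : (∑' i, EL i) ≠ ∞ := by
    have hle : (∑' i, EL i) ≤ G + (M - ENNReal.ofReal lam) * ENNReal.ofReal t := by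
      calc (∑' i, EL i)
          ≤ ∑' i, ((∫⁻ ω, (‖g0 i ω‖₊ : ℝ≥0∞) ∂μ) + (M - ENNReal.ofReal lam) * μ (A i)) :=
            ENNReal.tsum_le_tsum hELle
        _ = (∑' i, ∫⁻ ω, (‖g0 i ω‖₊ : ℝ≥0∞) ∂μ) + (M - ENNReal.ofReal lam) * (∑' i, μ (A i)) := by
            rw [ENNReal.tsum_add, ENNReal.tsum_mul_left]
        _ ≤ G + (M - ENNReal.ofReal lam) * ENNReal.ofReal t := by
            refine add_le_add (le_of_eq hswap0.symm) (mul_le_mul_right ?_ _)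
            rw [← hDlamA]
            exact hDlam
    refine ne_top_of_le_ne_top ?_ hle
    exact ENNReal.add_ne_top.mpr ⟨hGne,
      ENNReal.mul_ne_top (ne_top_of_le_ne_top hMne tsub_le_self) ENNReal.ofReal_ne_top⟩
  set T : ℝ := (∑' i, EL i).toReal + t * lam with hTdef
  -- Part U : KscSeq ≤ T
  have hU : KscSeq μ t f ≤ T := by
    set hh : ℕ → α → ℝ := fun i x => max (min (f' i x) lam) (-lam) with hhdef
    set gg : ℕ → α → ℝ := fun i x => f' i x - hh i x with hggdef
    have hggnorm : ∀ i x, (‖gg i x‖₊ : ℝ≥0∞) = (‖f' i x‖₊ : ℝ≥0∞) - ENNReal.ofReal lam :=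
      fun i x => (truncAbs lam (f' i x) hlam0).1
    have hhhle : ∀ i x, |hh i x| ≤ lam := fun i x => (truncAbs lam (f' i x) hlam0).2
    have hhhm : ∀ i, AEMeasurable (hh i) μ := fun i =>
      (((hf'meas i).min measurable_const).max measurable_const).aemeasurable
    have hggm : ∀ i, AEMeasurable (gg i) μ := fun i =>
      ((hf'meas i).sub (((hf'meas i).min measurable_const).max measurable_const)).aemeasurable
    have hdec : ∀ i, f i =ᵐ[μ] gg i + hh i := by
      intro i
      refine (hff' i).trans (ae_of_all _ fun x => ?_)
      simp [hggdef, hhdef]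
    have hGG : (∫⁻ ω, ∑' i, (‖gg i ω‖₊ : ℝ≥0∞) ∂μ) = ∑' i, EL i := by
      rw [lintegral_tsum (f := fun i ω => (‖gg i ω‖₊ : ℝ≥0∞)) (fun i => (hggm i).enorm)]
      refine tsum_congr fun i => ?_
      rw [hELdef]
      simp only
      exact lintegral_congr fun x => hggnorm i x
    have hMM : essSup (fun ω => ⨆ i, (‖hh i ω‖₊ : ℝ≥0∞)) μ ≤ ENNReal.ofReal lam := by
      refine essSup_le_of_ae_le _ (ae_of_all _ fun x => ?_)
      refine iSup_le fun i => ?_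
      rw [← enorm_eq_nnnorm, Real.enorm_eq_ofReal_abs]
      exact ENNReal.ofReal_le_ofReal (hhhle i x)
    have hmem : ((∫⁻ ω, ∑' i, (‖gg i ω‖₊ : ℝ≥0∞) ∂μ).toReal +
        t * (essSup (fun ω => ⨆ i, (‖hh i ω‖₊ : ℝ≥0∞)) μ).toReal) ∈ KSet :=
      ⟨gg, hh, hdec, hggm, hhhm, by rw [hGG]; exact hELfin,
        ne_top_of_le_ne_top ENNReal.ofReal_ne_top hMM, rfl⟩
    rw [hKscSeq]
    refine (csInf_le ⟨0, hKSet_nonneg⟩ hmem).trans ?_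
    rw [hTdef]
    refine add_le_add (le_of_eq (by rw [hGG])) ?_
    exact mul_le_mul_of_nonneg_left (ENNReal.toReal_le_of_le_ofReal hlam0 hMM) ht.le
  -- Part L : for every ε > 0, T - ε ≤ sSup RHS
  have hL : ∀ ε : ℝ, 0 < ε → T - ε ≤ sSup RHS := by
    intro ε hε
    -- choose lam' < lam and the slack distribution σ
    obtain ⟨lam', σ, hlam'0, hlam'le, hσB, hSigle, hσfin, harith⟩ :
        ∃ (lam' : ℝ) (σ : ℕ → ℝ≥0∞), 0 ≤ lam' ∧ lam' ≤ lam ∧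
          (∀ i, μ (A i) + σ i ≤ μ {x | lam' < |f' i x|}) ∧
          (D lam + ∑' i, σ i ≤ ENNReal.ofReal t) ∧ (∑' i, σ i) ≠ ∞ ∧
          lam * t - ε ≤ lam * (D lam).toReal + lam' * (∑' i, σ i).toReal := by
      rcases eq_or_lt_of_le hlam0 with hlamz | hlampos
      · -- lam = 0
        refine ⟨lam, (fun _ => 0), hlam0, le_rfl, ?_, ?_, ?_, ?_⟩
        · intro i
          simp only [add_zero]
          exact le_rfl
        · simpa using hDlam
        · simp
        · rw [← hlamz]
          simp
          nlinarith [ENNReal.toReal_nonneg (a := D lam)]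
      · -- 0 < lam
        set δ : ℝ := min (lam/2) (ε/t) with hδdef
        have hδpos : 0 < δ := lt_min (by linarith) (by positivity)
        have hδlam : δ ≤ lam/2 := min_le_left _ _
        have hδε : δ * t ≤ ε := by
          rw [hδdef]
          calc min (lam/2) (ε/t) * t ≤ (ε/t) * t :=
              mul_le_mul_of_nonneg_right (min_le_right _ _) ht.le
            _ = ε := by field_simp
        set lam' : ℝ := lam - δ with hlam'def
        have hlam'0 : 0 ≤ lam' := by rw [hlam'def]; linarith
        have hlam'lt : lam' < lam := by rw [hlam'def]; linarith
        have hDlam' : ENNReal.ofReal t < D lam' := by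
          by_contra hcon2
          push_neg at hcon2
          have : lam ≤ lam' := csInf_le hLbdd ⟨hlam'0, hcon2⟩
          linarith
        set c : ℕ → ℝ≥0∞ := fun i => μ {x | lam' < |f' i x|} - μ (A i) with hcdef2
        have hABsub : ∀ i, A i ⊆ {x | lam' < |f' i x|} := fun i x hx =>
          lt_of_le_of_lt hlam'lt.le hx
        have hAc : ∀ i, μ (A i) + c i = μ {x | lam' < |f' i x|} := fun i =>
          add_tsub_cancel_of_le (measure_mono (hABsub i))
        set S : ℝ≥0∞ := ENNReal.ofReal t - D lam with hSdef
        have hSfin : S ≠ ∞ := ne_top_of_le_ne_top ENNReal.ofReal_ne_top tsub_le_self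
        have hSle : S ≤ ∑' i, c i := by
          rw [hSdef]
          refine tsub_le_iff_left.mpr ?_
          calc ENNReal.ofReal t ≤ D lam' := hDlam'.le
            _ = ∑' i, μ {x | lam' < |f' i x|} := rfl
            _ = ∑' i, (μ (A i) + c i) := tsum_congr fun i => (hAc i).symm
            _ = D lam + ∑' i, c i := by rw [ENNReal.tsum_add, hDlamA]
        obtain ⟨σ, hσc, hσS⟩ := greedy c S hSle
        have hsum_eq : D lam + ∑' i, σ i = ENNReal.ofReal t := by
          rw [hσS, hSdef, add_tsub_cancel_of_le hDlam]
        refine ⟨lam', σ, hlam'0, hlam'lt.le, ?_, hsum_eq.le, ?_, ?_⟩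
        · intro i
          rw [← hAc i]
          exact add_le_add_right (hσc i) _
        · rw [hσS]; exact hSfin
        · -- arithmetic
          have hDfin : (D lam) ≠ ∞ := ne_top_of_le_ne_top ENNReal.ofReal_ne_top hDlam
          set a : ℝ := (D lam).toReal with hadef
          have ha0 : 0 ≤ a := ENNReal.toReal_nonneg
          have hsum_eq' : a + (∑' i, σ i).toReal = t := by
            rw [hadef, ← ENNReal.toReal_add hDfin (by rw [hσS]; exact hSfin), hsum_eq,
              ENNReal.toReal_ofReal ht.le]
          have hs0 : 0 ≤ (∑' i, σ i).toReal := ENNReal.toReal_nonneg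
          rw [hlam'def]
          nlinarith [hδε, hs0, hδpos.le]
    set B : ℕ → Set α := fun i => {x | lam' < |f' i x|} with hBdef
    have hBmeas : ∀ i, MeasurableSet (B i) :=
      fun i => measurableSet_lt measurable_const (hf'meas i).abs
    have hAB : ∀ i, A i ⊆ B i := fun i x hx => lt_of_le_of_lt hlam'le hx
    have hτfin : ∀ i, μ (A i) + σ i ≠ ∞ := by
      intro i
      exact ne_top_of_le_ne_top ENNReal.ofReal_ne_top
        (le_trans (add_le_add (hμAD i) (ENNReal.le_tsum (f := σ) i)) hSigle)
    set τ : ℕ → ℝ := fun i => (μ (A i) + σ i).toReal with hτdef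
    have hτ0 : ∀ i, 0 ≤ τ i := fun i => ENNReal.toReal_nonneg
    have hSigfin : ∑' i, (μ (A i) + σ i) ≠ ∞ := by
      rw [ENNReal.tsum_add, ← hDlamA]
      exact ne_top_of_le_ne_top ENNReal.ofReal_ne_top hSigle
    have hτsum : Summable τ := ENNReal.summable_toReal hSigfin
    have hτt : ∑' i, τ i ≤ t := by
      rw [hτdef, ← ENNReal.tsum_toReal_eq hτfin]
      have h2 : (∑' i, (μ (A i) + σ i)) ≤ ENNReal.ofReal t := by
        rw [ENNReal.tsum_add, ← hDlamA]
        exact hSigle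
      calc (∑' i, (μ (A i) + σ i)).toReal
          ≤ (ENNReal.ofReal t).toReal := ENNReal.toReal_mono ENNReal.ofReal_ne_top h2
        _ = t := ENNReal.toReal_ofReal ht.le
    set L : ℕ → ℝ≥0∞ := fun i => EL i + ENNReal.ofReal lam * μ (A i) + ENNReal.ofReal lam' * σ i
      with hLdef
    have hELi_fin : ∀ i, EL i ≠ ∞ := fun i =>
      ne_top_of_le_ne_top hELfin (ENNReal.le_tsum i)
    have hσi_fin : ∀ i, σ i ≠ ∞ := fun i =>
      ne_top_of_le_ne_top hσfin (ENNReal.le_tsum i)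
    have hLfin : ∀ i, L i ≠ ∞ := by
      intro i
      rw [hLdef]
      simp only
      refine ENNReal.add_ne_top.mpr ⟨ENNReal.add_ne_top.mpr ⟨hELi_fin i, ?_⟩, ?_⟩
      · exact ENNReal.mul_ne_top ENNReal.ofReal_ne_top (hμA_fin i)
      · exact ENNReal.mul_ne_top ENNReal.ofReal_ne_top (hσi_fin i)
    -- lower bound for each Ksc
    have hKlow : ∀ i, (L i).toReal ≤ Ksc μ (τ i) (f i) := by
      intro i
      refine le_Ksc (hMg0 i) (hMh0 i) (hfd i) ?_
      rintro r ⟨g, h, hg, hh, hfgh, rfl⟩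
      have hfgh' : f' i =ᵐ[μ] g + h := (hff' i).symm.trans hfgh
      have hkey := kLower (μ := μ) hfgh' hlam'0 hlam'le (hAmeas i) (hBmeas i) (hAB i)
        (fun x hx => hx) (fun x hx => hx) (hμA_fin i) (hσB i)
      rw [← hELA i] at hkey
      have hgfin : (∫⁻ x, (‖g x‖₊ : ℝ≥0∞) ∂μ) ≠ ∞ := by
        simp only [← enorm_eq_nnnorm]; rw [← eLpNorm_one_eq_lintegral_enorm]
        exact hg.2.ne
      have hhfin : eLpNormEssSup h μ ≠ ∞ := by
        rw [← eLpNorm_exponent_top]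
        exact hh.2.ne
      calc (L i).toReal
          ≤ ((∫⁻ x, (‖g x‖₊ : ℝ≥0∞) ∂μ) + (μ (A i) + σ i) * eLpNormEssSup h μ).toReal :=
            ENNReal.toReal_mono
              (ENNReal.add_ne_top.mpr ⟨hgfin, ENNReal.mul_ne_top (hτfin i) hhfin⟩) hkey
        _ = (eLpNorm g 1 μ).toReal + τ i * (eLpNorm h ⊤ μ).toReal := by
            rw [ENNReal.toReal_add hgfin (ENNReal.mul_ne_top (hτfin i) hhfin),
              ENNReal.toReal_mul, eLpNorm_one_eq_lintegral_enorm, eLpNorm_exponent_top, hτdef]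
            rfl
    -- upper bound and summability of the Ksc sequence
    have hKup : ∀ i, Ksc μ (τ i) (f i) ≤ (∫⁻ ω, (‖g0 i ω‖₊ : ℝ≥0∞) ∂μ).toReal + τ i * M.toReal := by
      intro i
      refine (Ksc_le (hτ0 i) (hMg0 i) (hMh0 i) (hfd i)).trans ?_
      rw [eLpNorm_one_eq_lintegral_enorm]
      exact add_le_add le_rfl
        (mul_le_mul_of_nonneg_left (ENNReal.toReal_mono hMne (hMi0 i)) (hτ0 i))
    have hKsummable : Summable (fun i => Ksc μ (τ i) (f i)) := by
      refine Summable.of_nonneg_of_le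
        (fun i => Ksc_nonneg (hτ0 i) (hMg0 i) (hMh0 i) (hfd i)) hKup ?_
      exact (ENNReal.summable_toReal (hswap0 ▸ hGne)).add (hτsum.mul_right M.toReal)
    have hLsumfin : (∑' i, L i) ≠ ∞ := by
      rw [hLdef]
      simp only
      rw [ENNReal.tsum_add, ENNReal.tsum_add, ENNReal.tsum_mul_left, ENNReal.tsum_mul_left]
      refine ENNReal.add_ne_top.mpr ⟨ENNReal.add_ne_top.mpr ⟨hELfin, ?_⟩, ?_⟩
      · rw [← hDlamA]
        exact ENNReal.mul_ne_top ENNReal.ofReal_ne_top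
          (ne_top_of_le_ne_top ENNReal.ofReal_ne_top hDlam)
      · exact ENNReal.mul_ne_top ENNReal.ofReal_ne_top hσfin
    have hLsum : Summable (fun i => (L i).toReal) := ENNReal.summable_toReal hLsumfin
    have hmem : (∑' i, Ksc μ (τ i) (f i)) ∈ RHS := ⟨τ, hτ0, hτsum, hτt, hKsummable, rfl⟩
    calc T - ε ≤ ∑' i, (L i).toReal := by
          rw [← ENNReal.tsum_toReal_eq hLfin]
          have hSigL : ∑' i, L i = (∑' i, EL i) + ENNReal.ofReal lam * D lam
              + ENNReal.ofReal lam' * (∑' i, σ i) := by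
            rw [hLdef]
            simp only
            rw [ENNReal.tsum_add, ENNReal.tsum_add, ENNReal.tsum_mul_left, ENNReal.tsum_mul_left,
              hDlamA]
          rw [hSigL]
          have hfin1 : ENNReal.ofReal lam * D lam ≠ ∞ :=
            ENNReal.mul_ne_top ENNReal.ofReal_ne_top
              (ne_top_of_le_ne_top ENNReal.ofReal_ne_top hDlam)
          have hfin2 : ENNReal.ofReal lam' * (∑' i, σ i) ≠ ∞ :=
            ENNReal.mul_ne_top ENNReal.ofReal_ne_top hσfin
          rw [ENNReal.toReal_add (ENNReal.add_ne_top.mpr ⟨hELfin, hfin1⟩) hfin2,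
            ENNReal.toReal_add hELfin hfin1, ENNReal.toReal_mul, ENNReal.toReal_mul,
            ENNReal.toReal_ofReal hlam0, ENNReal.toReal_ofReal hlam'0]
          rw [hTdef]
          linarith
      _ ≤ ∑' i, Ksc μ (τ i) (f i) := Summable.tsum_le_tsum hKlow hLsum hKsummable
      _ ≤ sSup RHS := le_csSup hRHS_bdd hmem
  -- final assembly
  have hT : T ≤ sSup RHS := by
    by_contra hcon
    push_neg at hcon
    have := hL ((T - sSup RHS)/2) (by linarith)
    linarith
  exact hU.trans hT
end

section
/- Let (Ω', μ') be a measure space and 0 < p < ∞. Define T_p : L_p(μ') → measurable functions on Ω' × (0,∞) by T_p(f)(ω', ω) = ω^{-1/p} f(ω'). Then for every f ∈ L_p(μ') and every t > 0, t^p · m({ |T_p f| > t }) = ∫ |f|^p dμ', where m = μ' × Lebesgue measure on (0,∞). Consequently ‖T_p f‖_{L_{p,∞}(m)} = ‖f‖_{L_p(μ')}, i.e. T_p is an isometric embedding of L_p into weak-L_p of the product space. -/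
open MeasureTheory ENNReal Set

/-- The weak-`L_p` quasi-norm `‖g‖_{p,∞} = sup_{t>0} t · ν(|g| > t)^{1/p}`. -/
noncomputable def wLpNorm {α : Type*} [MeasurableSpace α] (ν : Measure α) (p : ℝ)
    (g : α → ℝ) : ℝ≥0∞ :=
  ⨆ t : Set.Ioi (0:ℝ), ENNReal.ofReal t.1 * (ν {x | t.1 < |g x|}) ^ (1/p)

/-- The `L_p` norm `(∫ |f|^p dν)^{1/p}` (as an `ℝ≥0∞`-valued quantity). -/
noncomputable def LpNormR {α : Type*} [MeasurableSpace α] (ν : Measure α) (p : ℝ)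
    (f : α → ℝ) : ℝ≥0∞ :=
  (∫⁻ x, ENNReal.ofReal (|f x| ^ p) ∂ν) ^ (1/p)

/-- Formulas (12)–(13): `T_p f(ω', ω) = ω^{-1/p} f(ω')` satisfies
`t^p · m(|T_p f| > t) = ∫ |f|^p dμ'` for all `t > 0`, where `m = μ' × ds` on `Ω' × (0,∞)`;
consequently `T_p` is an isometric embedding of `L_p(μ')` into weak-`L_p(m)`. -/
theorem Tp_isometric_weakLp {Ω' : Type*} [MeasurableSpace Ω'] (μ' : Measure Ω')
    (p : ℝ) (hp : 0 < p) (f : Ω' → ℝ) (hmeas : Measurable f)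
    (hf : MemLp f (ENNReal.ofReal p) μ') :
    (∀ t > 0, ENNReal.ofReal (t ^ p) *
        (μ'.prod (volume.restrict (Set.Ioi (0:ℝ))))
          {z : Ω' × ℝ | t < |Real.rpow z.2 (-(1/p)) * f z.1|} =
        ∫⁻ ω', ENNReal.ofReal (|f ω'| ^ p) ∂μ') ∧
    wLpNorm (μ'.prod (volume.restrict (Set.Ioi (0:ℝ)))) p
        (fun z => Real.rpow z.2 (-(1/p)) * f z.1) = LpNormR μ' p f := by
  set I : ℝ≥0∞ := ∫⁻ ω', ENNReal.ofReal (|f ω'| ^ p) ∂μ' with hI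
  have hrpow : Measurable fun s : ℝ => Real.rpow s (-(1/p)) := by
    have : (fun s : ℝ => Real.rpow s (-(1/p))) = fun s : ℝ => s ^ (-(1/p)) := rfl
    rw [this]
    exact measurable_id.pow measurable_const
  have hmg : Measurable fun z : Ω' × ℝ => |Real.rpow z.2 (-(1/p)) * f z.1| :=
    ((hrpow.comp measurable_snd).mul (hmeas.comp measurable_fst)).abs
  -- key measure computation
  have key : ∀ t : ℝ, 0 < t →
      (μ'.prod (volume.restrict (Set.Ioi (0:ℝ))))
        {z : Ω' × ℝ | t < |Real.rpow z.2 (-(1/p)) * f z.1|} = I / ENNReal.ofReal (t ^ p) := by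
    intro t ht
    have hS : MeasurableSet {z : Ω' × ℝ | t < |Real.rpow z.2 (-(1/p)) * f z.1|} :=
      measurableSet_lt measurable_const hmg
    rw [Measure.prod_apply hS]
    have hsec : ∀ ω' : Ω',
        (volume.restrict (Set.Ioi (0:ℝ)))
          (Prod.mk ω' ⁻¹' {z : Ω' × ℝ | t < |Real.rpow z.2 (-(1/p)) * f z.1|}) =
        ENNReal.ofReal (|f ω'| ^ p) / ENNReal.ofReal (t ^ p) := by
      intro ω'
      have hmg' : MeasurableSet {s : ℝ | t < |Real.rpow s (-(1/p)) * f ω'|} :=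
        measurableSet_lt measurable_const ((hrpow.mul measurable_const).abs)
      have hpre : Prod.mk ω' ⁻¹' {z : Ω' × ℝ | t < |Real.rpow z.2 (-(1/p)) * f z.1|}
          = {s : ℝ | t < |Real.rpow s (-(1/p)) * f ω'|} := rfl
      rw [hpre, Measure.restrict_apply hmg']
      have hseteq : {s : ℝ | t < |Real.rpow s (-(1/p)) * f ω'|} ∩ Set.Ioi (0:ℝ)
          = Set.Ioo 0 (|f ω'| ^ p / t ^ p) := by
        ext s
        simp only [Set.mem_inter_iff, Set.mem_setOf_eq, Set.mem_Ioi, Set.mem_Ioo]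
        rw [show Real.rpow s (-(1/p)) = s ^ (-(1/p)) from rfl]
        constructor
        · rintro ⟨h1, hs⟩
          refine ⟨hs, ?_⟩
          rw [abs_mul, abs_of_pos (Real.rpow_pos_of_pos hs _)] at h1
          rw [Real.rpow_neg hs.le, inv_mul_eq_div,
            lt_div_iff₀ (Real.rpow_pos_of_pos hs _)] at h1
          have h3 : (t * s ^ (1/p)) ^ p < |f ω'| ^ p :=
            (Real.rpow_lt_rpow_iff (by positivity) (abs_nonneg _) hp).2 h1
          rw [Real.mul_rpow ht.le (by positivity), one_div,
            Real.rpow_inv_rpow hs.le hp.ne'] at h3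
          rw [lt_div_iff₀ (by positivity), mul_comm]
          exact h3
        · rintro ⟨hs, h1⟩
          refine ⟨?_, hs⟩
          rw [lt_div_iff₀ (by positivity), mul_comm] at h1
          have h3 : (t * s ^ (1/p)) ^ p < |f ω'| ^ p := by
            rwa [Real.mul_rpow ht.le (by positivity), one_div,
              Real.rpow_inv_rpow hs.le hp.ne']
          have h2 : t * s ^ (1/p) < |f ω'| :=
            (Real.rpow_lt_rpow_iff (by positivity) (abs_nonneg _) hp).1 h3
          rw [abs_mul, abs_of_pos (Real.rpow_pos_of_pos hs _), Real.rpow_neg hs.le,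
            inv_mul_eq_div, lt_div_iff₀ (Real.rpow_pos_of_pos hs _)]
          exact h2
      rw [hseteq, Real.volume_Ioo, sub_zero,
        ENNReal.ofReal_div_of_pos (by positivity)]
    simp only [hsec]
    have hmeasI : Measurable fun ω' => ENNReal.ofReal (|f ω'| ^ p) :=
      (hmeas.abs.pow measurable_const).ennreal_ofReal
    simp only [div_eq_mul_inv]
    rw [lintegral_mul_const _ hmeasI]
  constructor
  · intro t ht
    rw [key t ht]
    exact ENNReal.mul_div_cancel (by simp [ENNReal.ofReal_eq_zero]; positivity)
      ENNReal.ofReal_ne_top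
  · haveI : Nonempty (Set.Ioi (0:ℝ)) := ⟨⟨1, Set.mem_Ioi.mpr one_pos⟩⟩
    unfold wLpNorm LpNormR
    rw [← hI]
    have : ∀ t : Set.Ioi (0:ℝ),
        ENNReal.ofReal t.1 *
          ((μ'.prod (volume.restrict (Set.Ioi (0:ℝ))))
            {z : Ω' × ℝ | t.1 < |Real.rpow z.2 (-(1/p)) * f z.1|}) ^ (1/p)
        = I ^ (1/p) := by
      rintro ⟨t, ht'⟩
      have ht : (0:ℝ) < t := ht'
      simp only
      rw [key t ht, ENNReal.div_rpow_of_nonneg _ _ (by positivity),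
        ENNReal.ofReal_rpow_of_pos (by positivity), one_div,
        Real.rpow_rpow_inv ht.le hp.ne']
      rw [ENNReal.mul_div_cancel (by simp [ENNReal.ofReal_eq_zero]; exact ht)
        ENNReal.ofReal_ne_top]
    simp only [this, iSup_const]
end

section
/- Let (A₀, A₁) be a compatible couple of quasi-Banach spaces and let 0 < r < 1. There is a constant c (depending only on r) such that for every x = (x_i) ∈ ℓ_r(A₀) + ℓ_∞(A₁) and every t > 0, sup { (Σ_i K_{t_i}(x_i; A₀, A₁)^r)^{1/r} : t_i ≥ 0, Σ_i t_i^r ≤ t^r } ≤ c · K_t(x; ℓ_r(A₀), ℓ_∞(A₁)). -/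
open MeasureTheory ENNReal Set

/-- `IsQuasiNorm N κ` : `N` is a quasi-norm with modulus `κ` on a real vector space. -/
def IsQuasiNorm {A : Type*} [AddCommGroup A] [Module ℝ A] (N : A → ℝ) (κ : ℝ) : Prop :=
  (∀ a, 0 ≤ N a) ∧ (∀ a, N a = 0 ↔ a = 0) ∧
  (∀ (c : ℝ) (a : A), N (c • a) = |c| * N a) ∧
  ∀ a b, N (a + b) ≤ κ * (N a + N b)

/-- The `K_t`-functional of a compatible couple of quasi-normed spaces. -/
noncomputable def Kq {V A₀ A₁ : Type*} [AddCommGroup V] [Module ℝ V]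
    [AddCommGroup A₀] [Module ℝ A₀] [AddCommGroup A₁] [Module ℝ A₁]
    (N₀ : A₀ → ℝ) (N₁ : A₁ → ℝ) (j₀ : A₀ →ₗ[ℝ] V) (j₁ : A₁ →ₗ[ℝ] V)
    (t : ℝ) (v : V) : ℝ :=
  sInf {r | ∃ (a : A₀) (b : A₁), v = j₀ a + j₁ b ∧ r = N₀ a + t * N₁ b}

private lemma real_rpow_add_le_add_rpow' {x y : ℝ} (hx : 0 ≤ x) (hy : 0 ≤ y) {p : ℝ}
    (hp : 0 ≤ p) (hp1 : p ≤ 1) : (x + y) ^ p ≤ x ^ p + y ^ p := by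
  lift x to NNReal using hx
  lift y to NNReal using hy
  exact_mod_cast NNReal.rpow_add_le_add_rpow x y hp hp1

private lemma real_rpow_add_le_mul' {x y : ℝ} (hx : 0 ≤ x) (hy : 0 ≤ y) {p : ℝ}
    (hp : 1 ≤ p) : (x + y) ^ p ≤ 2 ^ (p - 1) * (x ^ p + y ^ p) := by
  lift x to NNReal using hx
  lift y to NNReal using hy
  exact_mod_cast NNReal.rpow_add_le_mul_rpow_add_rpow x y hp

/-- Formula (15), Remark 9: for a compatible couple of quasi-Banach spaces and `0 < r < 1`,
there is a constant `c` such that for all `x ∈ ℓ_r(A₀) + ℓ_∞(A₁)` and `t > 0`,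
`sup { (Σ K_{tᵢ}(xᵢ)^r)^{1/r} : tᵢ ≥ 0, Σ tᵢ^r ≤ t^r } ≤ c · K_t(x; ℓ_r(A₀), ℓ_∞(A₁))`. -/
theorem Kq_lr_linf_lower_bound
    {V A₀ A₁ : Type*} [AddCommGroup V] [Module ℝ V] [TopologicalSpace V]
    [IsTopologicalAddGroup V] [ContinuousSMul ℝ V] [T2Space V]
    [AddCommGroup A₀] [Module ℝ A₀] [UniformSpace A₀] [CompleteSpace A₀]
    [AddCommGroup A₁] [Module ℝ A₁] [UniformSpace A₁] [CompleteSpace A₁]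
    (N₀ : A₀ → ℝ) (N₁ : A₁ → ℝ) (κ₀ κ₁ : ℝ)
    (hN₀ : IsQuasiNorm N₀ κ₀) (hN₁ : IsQuasiNorm N₁ κ₁)
    (j₀ : A₀ →ₗ[ℝ] V) (j₁ : A₁ →ₗ[ℝ] V)
    (hi₀ : Function.Injective j₀) (hi₁ : Function.Injective j₁)
    (r : ℝ) (hr : 0 < r) (hr' : r < 1) :
    ∃ c > 0, ∀ x : ℕ → V,
      (∃ (a : ℕ → A₀) (b : ℕ → A₁), Summable (fun i => Real.rpow (N₀ (a i)) r) ∧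
        BddAbove (Set.range fun i => N₁ (b i)) ∧ ∀ i, x i = j₀ (a i) + j₁ (b i)) →
      ∀ t > 0,
      sSup {s | ∃ τ : ℕ → ℝ, (∀ i, 0 ≤ τ i) ∧ Summable (fun i => Real.rpow (τ i) r) ∧
          (∑' i, Real.rpow (τ i) r) ≤ Real.rpow t r ∧
          Summable (fun i => Real.rpow (Kq N₀ N₁ j₀ j₁ (τ i) (x i)) r) ∧
          s = Real.rpow (∑' i, Real.rpow (Kq N₀ N₁ j₀ j₁ (τ i) (x i)) r) (1/r)} ≤
      c * sInf {u | ∃ (a : ℕ → A₀) (b : ℕ → A₁),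
          Summable (fun i => Real.rpow (N₀ (a i)) r) ∧
          BddAbove (Set.range fun i => N₁ (b i)) ∧
          (∀ i, x i = j₀ (a i) + j₁ (b i)) ∧
          u = Real.rpow (∑' i, Real.rpow (N₀ (a i)) r) (1/r) + t * (⨆ i, N₁ (b i))} := by
  have hc : (0:ℝ) < 2 ^ (1/r - 1) := Real.rpow_pos_of_pos (by norm_num) _
  refine ⟨2 ^ (1/r - 1), hc, ?_⟩
  intro x hx t ht
  obtain ⟨a₀, b₀, hsa₀, hbb₀, hdec₀⟩ := hx
  set c : ℝ := 2 ^ (1/r - 1) with hcdef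
  have hUne : ∃ u, u ∈ {u | ∃ (a : ℕ → A₀) (b : ℕ → A₁),
          Summable (fun i => Real.rpow (N₀ (a i)) r) ∧
          BddAbove (Set.range fun i => N₁ (b i)) ∧
          (∀ i, x i = j₀ (a i) + j₁ (b i)) ∧
          u = Real.rpow (∑' i, Real.rpow (N₀ (a i)) r) (1/r) + t * (⨆ i, N₁ (b i))} :=
    ⟨_, a₀, b₀, hsa₀, hbb₀, hdec₀, rfl⟩
  have hir : (1:ℝ) ≤ 1/r := by
    rw [le_div_iff₀ hr, one_mul]; exact hr'.le
  have key : ∀ (a : ℕ → A₀) (b : ℕ → A₁),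
      Summable (fun i => Real.rpow (N₀ (a i)) r) →
      BddAbove (Set.range fun i => N₁ (b i)) →
      (∀ i, x i = j₀ (a i) + j₁ (b i)) →
      ∀ s ∈ {s | ∃ τ : ℕ → ℝ, (∀ i, 0 ≤ τ i) ∧ Summable (fun i => Real.rpow (τ i) r) ∧
          (∑' i, Real.rpow (τ i) r) ≤ Real.rpow t r ∧
          Summable (fun i => Real.rpow (Kq N₀ N₁ j₀ j₁ (τ i) (x i)) r) ∧
          s = Real.rpow (∑' i, Real.rpow (Kq N₀ N₁ j₀ j₁ (τ i) (x i)) r) (1/r)},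
      s ≤ c * (Real.rpow (∑' i, Real.rpow (N₀ (a i)) r) (1/r) + t * (⨆ i, N₁ (b i))) := by
    rintro a b hsa hbb hdec s ⟨τ, hτ0, hτsum, hτle, hKsum, rfl⟩
    set M : ℝ := ⨆ i, N₁ (b i) with hM
    have hM0 : 0 ≤ M := Real.iSup_nonneg fun i => hN₁.1 _
    have hMle : ∀ i, N₁ (b i) ≤ M := fun i => le_ciSup hbb i
    have hKnn : ∀ i, 0 ≤ Kq N₀ N₁ j₀ j₁ (τ i) (x i) := by
      intro i
      apply Real.sInf_nonneg
      rintro y ⟨p, q, -, rfl⟩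
      have h1 := hN₀.1 p; have h2 := hN₁.1 q; have h3 := hτ0 i
      positivity
    have hKle : ∀ i, Kq N₀ N₁ j₀ j₁ (τ i) (x i) ≤ N₀ (a i) + τ i * M := by
      intro i
      have hbdd : BddBelow {y : ℝ | ∃ (p : A₀) (q : A₁), x i = j₀ p + j₁ q ∧ y = N₀ p + τ i * N₁ q} := by
        refine ⟨0, ?_⟩
        rintro y ⟨p, q, -, rfl⟩
        have h1 := hN₀.1 p; have h2 := hN₁.1 q; have h3 := hτ0 i
        positivity
      calc Kq N₀ N₁ j₀ j₁ (τ i) (x i) ≤ N₀ (a i) + τ i * N₁ (b i) :=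
            csInf_le hbdd ⟨a i, b i, hdec i, rfl⟩
        _ ≤ N₀ (a i) + τ i * M := by
            have := mul_le_mul_of_nonneg_left (hMle i) (hτ0 i)
            linarith
    have hpow : ∀ i, Real.rpow (Kq N₀ N₁ j₀ j₁ (τ i) (x i)) r ≤
        Real.rpow (N₀ (a i)) r + Real.rpow (τ i) r * M ^ r := by
      intro i
      have h1 : Real.rpow (Kq N₀ N₁ j₀ j₁ (τ i) (x i)) r ≤ (N₀ (a i) + τ i * M) ^ r :=
        Real.rpow_le_rpow (hKnn i) (hKle i) hr.le
      have h2 : (N₀ (a i) + τ i * M) ^ r ≤ (N₀ (a i)) ^ r + (τ i * M) ^ r :=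
        real_rpow_add_le_add_rpow' (hN₀.1 _) (mul_nonneg (hτ0 i) hM0) hr.le hr'.le
      have h3 : (τ i * M) ^ r = (τ i) ^ r * M ^ r := Real.mul_rpow (hτ0 i) hM0
      calc Real.rpow (Kq N₀ N₁ j₀ j₁ (τ i) (x i)) r ≤ _ := h1
        _ ≤ (N₀ (a i)) ^ r + (τ i * M) ^ r := h2
        _ = _ := by rw [h3]; rfl
    have hRHSsum : Summable (fun i => Real.rpow (N₀ (a i)) r + Real.rpow (τ i) r * M ^ r) :=
      hsa.add (hτsum.mul_right _)
    have htsum_le : (∑' i, Real.rpow (Kq N₀ N₁ j₀ j₁ (τ i) (x i)) r) ≤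
        (∑' i, Real.rpow (N₀ (a i)) r) + (t * M) ^ r := by
      have h1 : (∑' i, Real.rpow (Kq N₀ N₁ j₀ j₁ (τ i) (x i)) r) ≤
          ∑' i, (Real.rpow (N₀ (a i)) r + Real.rpow (τ i) r * M ^ r) :=
        Summable.tsum_le_tsum hpow hKsum hRHSsum
      have h2 : (∑' i, (Real.rpow (N₀ (a i)) r + Real.rpow (τ i) r * M ^ r)) =
          (∑' i, Real.rpow (N₀ (a i)) r) + (∑' i, Real.rpow (τ i) r) * M ^ r := by
        rw [Summable.tsum_add hsa (hτsum.mul_right _), tsum_mul_right]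
      have h3 : (∑' i, Real.rpow (τ i) r) * M ^ r ≤ t ^ r * M ^ r :=
        mul_le_mul_of_nonneg_right hτle (Real.rpow_nonneg hM0 r)
      have h4 : t ^ r * M ^ r = (t * M) ^ r := (Real.mul_rpow ht.le hM0).symm
      calc (∑' i, Real.rpow (Kq N₀ N₁ j₀ j₁ (τ i) (x i)) r) ≤ _ := h1
        _ = _ := h2
        _ ≤ (∑' i, Real.rpow (N₀ (a i)) r) + t ^ r * M ^ r := by linarith
        _ = _ := by rw [h4]
    have hKtn : 0 ≤ ∑' i, Real.rpow (Kq N₀ N₁ j₀ j₁ (τ i) (x i)) r :=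
      tsum_nonneg fun i => Real.rpow_nonneg (hKnn i) r
    have hAnn : 0 ≤ ∑' i, Real.rpow (N₀ (a i)) r :=
      tsum_nonneg fun i => Real.rpow_nonneg (hN₀.1 _) r
    have hBnn : 0 ≤ (t * M) ^ r := Real.rpow_nonneg (mul_nonneg ht.le hM0) r
    have step1 : Real.rpow (∑' i, Real.rpow (Kq N₀ N₁ j₀ j₁ (τ i) (x i)) r) (1/r) ≤
        ((∑' i, Real.rpow (N₀ (a i)) r) + (t * M) ^ r) ^ (1/r) :=
      Real.rpow_le_rpow hKtn htsum_le (by positivity)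
    have step2 : ((∑' i, Real.rpow (N₀ (a i)) r) + (t * M) ^ r) ^ (1/r) ≤
        c * ((∑' i, Real.rpow (N₀ (a i)) r) ^ (1/r) + ((t * M) ^ r) ^ (1/r)) :=
      real_rpow_add_le_mul' hAnn hBnn hir
    have hcollapse : ((t * M) ^ r) ^ (1/r) = t * M := by
      rw [← Real.rpow_mul (mul_nonneg ht.le hM0), mul_one_div_cancel hr.ne',
        Real.rpow_one]
    calc Real.rpow (∑' i, Real.rpow (Kq N₀ N₁ j₀ j₁ (τ i) (x i)) r) (1/r) ≤ _ := step1
      _ ≤ c * ((∑' i, Real.rpow (N₀ (a i)) r) ^ (1/r) + ((t * M) ^ r) ^ (1/r)) := step2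
      _ = c * (Real.rpow (∑' i, Real.rpow (N₀ (a i)) r) (1/r) + t * M) := by
          rw [hcollapse]; rfl
  have hsup_le : ∀ u ∈ {u | ∃ (a : ℕ → A₀) (b : ℕ → A₁),
          Summable (fun i => Real.rpow (N₀ (a i)) r) ∧
          BddAbove (Set.range fun i => N₁ (b i)) ∧
          (∀ i, x i = j₀ (a i) + j₁ (b i)) ∧
          u = Real.rpow (∑' i, Real.rpow (N₀ (a i)) r) (1/r) + t * (⨆ i, N₁ (b i))},
      sSup {s | ∃ τ : ℕ → ℝ, (∀ i, 0 ≤ τ i) ∧ Summable (fun i => Real.rpow (τ i) r) ∧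
          (∑' i, Real.rpow (τ i) r) ≤ Real.rpow t r ∧
          Summable (fun i => Real.rpow (Kq N₀ N₁ j₀ j₁ (τ i) (x i)) r) ∧
          s = Real.rpow (∑' i, Real.rpow (Kq N₀ N₁ j₀ j₁ (τ i) (x i)) r) (1/r)} ≤ c * u := by
    rintro u ⟨a, b, hsa, hbb, hdec, rfl⟩
    have hM0 : 0 ≤ ⨆ i, N₁ (b i) := Real.iSup_nonneg fun i => hN₁.1 _
    have hAnn : 0 ≤ Real.rpow (∑' i, Real.rpow (N₀ (a i)) r) (1/r) :=
      Real.rpow_nonneg (tsum_nonneg fun i => Real.rpow_nonneg (hN₀.1 _) r) _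
    refine Real.sSup_le (fun s hs => key a b hsa hbb hdec s hs) ?_
    have : 0 ≤ Real.rpow (∑' i, Real.rpow (N₀ (a i)) r) (1/r) + t * ⨆ i, N₁ (b i) := by
      have := mul_nonneg ht.le hM0
      linarith
    positivity
  obtain ⟨u₀, hu₀⟩ := hUne
  have hdiv : sSup {s | ∃ τ : ℕ → ℝ, (∀ i, 0 ≤ τ i) ∧ Summable (fun i => Real.rpow (τ i) r) ∧
          (∑' i, Real.rpow (τ i) r) ≤ Real.rpow t r ∧
          Summable (fun i => Real.rpow (Kq N₀ N₁ j₀ j₁ (τ i) (x i)) r) ∧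
          s = Real.rpow (∑' i, Real.rpow (Kq N₀ N₁ j₀ j₁ (τ i) (x i)) r) (1/r)} / c ≤
      sInf {u | ∃ (a : ℕ → A₀) (b : ℕ → A₁),
          Summable (fun i => Real.rpow (N₀ (a i)) r) ∧
          BddAbove (Set.range fun i => N₁ (b i)) ∧
          (∀ i, x i = j₀ (a i) + j₁ (b i)) ∧
          u = Real.rpow (∑' i, Real.rpow (N₀ (a i)) r) (1/r) + t * (⨆ i, N₁ (b i))} :=
    le_csInf ⟨u₀, hu₀⟩ fun u hu => (div_le_iff₀ hc).mpr (by
      have := hsup_le u hu; linarith [mul_comm c u ▸ this])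
  calc sSup _ = sSup _ / c * c := by field_simp
    _ ≤ sInf _ * c := mul_le_mul_of_nonneg_right hdiv hc.le
    _ = c * sInf _ := mul_comm _ _
end

section
/- Let C be a nonempty subset of ℝⁿ closed under the following property: for every choice of nonnegative ξ = (ξ_i) with Σξ_i < 1 there exists y ∈ C with Σ_i ξ_i y_i < 1. Then for every ε > 0 the convex hull of C intersects the open set (−∞, 1+ε)ⁿ; that is, there exist finitely many points y¹,…,y^M ∈ C and nonnegative λ₁,…,λ_M with Σλ_m = 1 such that Σ_m λ_m y^m_i < 1 + ε for every coordinate i = 1,…,n. -/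
open Finset

/-- The Hahn–Banach / minimax separation step in the proof of Theorem 1: if `C ⊆ ℝⁿ` is
nonempty and for every nonnegative `ξ` with `Σ ξᵢ < 1` some `y ∈ C` has `Σ ξᵢ yᵢ < 1`,
then for every `ε > 0` there is a convex combination of points of `C` lying in
`(−∞, 1 + ε)ⁿ`. -/
theorem convexHull_meets_of_separation {n : ℕ} (C : Set (Fin n → ℝ)) (hC : C.Nonempty)
    (h : ∀ ξ : Fin n → ℝ, (∀ i, 0 ≤ ξ i) → (∑ i, ξ i) < 1 →
      ∃ y ∈ C, (∑ i, ξ i * y i) < 1) :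
    ∀ ε > 0, ∃ (M : ℕ) (y : Fin M → (Fin n → ℝ)) (lam : Fin M → ℝ),
      (∀ m, y m ∈ C) ∧ (∀ m, 0 ≤ lam m) ∧ (∑ m, lam m) = 1 ∧
      ∀ i, (∑ m, lam m * y m i) < 1 + ε := by
  intro ε hε
  by_contra hcon
  push_neg at hcon
  -- The open convex set `U = (-∞, 1+ε)ⁿ`.
  set U : Set (Fin n → ℝ) := Set.pi Set.univ (fun _ => Set.Iio (1 + ε)) with hU
  have hUopen : IsOpen U := isOpen_set_pi Set.finite_univ (fun _ _ => isOpen_Iio)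
  have hUconvex : Convex ℝ U := convex_pi (fun _ _ => convex_Iio _)
  have hKconvex : Convex ℝ (convexHull ℝ C) := convex_convexHull ℝ C
  -- Disjointness of `U` and the convex hull of `C`.
  have hdisj : Disjoint U (convexHull ℝ C) := by
    rw [Set.disjoint_left]
    intro x hxU hxK
    rw [_root_.convexHull_eq] at hxK
    obtain ⟨ι, t, w, z, hw0, hw1, hzC, hcm⟩ := hxK
    rw [Finset.centerMass_eq_of_sum_1 _ _ hw1] at hcm
    -- reindex by `Fin t.card`
    let e := t.equivFin
    have key : ∀ g : ι → ℝ, ∑ m : Fin t.card, g (e.symm m).1 = ∑ i ∈ t, g i := by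
      intro g
      rw [← Finset.sum_attach t g]
      exact Equiv.sum_comp e.symm (fun i : t => g i.1)
    obtain ⟨i, hi⟩ := hcon t.card (fun m => z (e.symm m).1) (fun m => w (e.symm m).1)
      (fun m => hzC _ (e.symm m).2) (fun m => hw0 _ (e.symm m).2)
      (by rw [key]; exact hw1)
    have hx_i : ∑ m : Fin t.card, w (e.symm m).1 * z (e.symm m).1 i = x i := by
      rw [key (fun j => w j * z j i), ← hcm]
      simp [Finset.sum_apply]
    have := hxU i (Set.mem_univ i)
    rw [← hx_i] at this
    exact absurd this (not_lt.2 hi)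
  obtain ⟨f, u, hfU, hfK⟩ := geometric_hahn_banach_open hUconvex hUopen hKconvex hdisj
  -- coordinates of `f`
  set c : Fin n → ℝ := fun i => f (fun j => if i = j then 1 else 0) with hc
  have hf_eq : ∀ x : Fin n → ℝ, f x = ∑ i, x i * c i := by
    intro x
    simpa [smul_eq_mul] using LinearMap.pi_apply_eq_sum_univ (f : (Fin n → ℝ) →ₗ[ℝ] ℝ) x
  have hu_pos : 0 < u := by
    have h0 : (0 : Fin n → ℝ) ∈ U := by
      intro i _; simpa using by linarith
    have := hfU 0 h0
    simpa using this
  have hc_nonneg : ∀ i, 0 ≤ c i := by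
    intro i
    by_contra hci
    push_neg at hci
    -- the point `single i (u / c i)` lies in U and f of it equals u
    have hmem : (fun j => if i = j then u / c i else 0) ∈ U := by
      intro j _
      simp only [Set.mem_Iio]
      by_cases hij : i = j
      · rw [if_pos hij]
        have : u / c i < 0 := div_neg_of_pos_of_neg hu_pos hci
        linarith
      · rw [if_neg hij]; linarith
    have := hfU _ hmem
    rw [hf_eq] at this
    have hval : ∑ j, (if i = j then u / c i else 0) * c j = u := by
      rw [Finset.sum_eq_single i]
      · rw [if_pos rfl, div_mul_cancel₀ _ hci.ne]
      · intro j _ hj; simp [Ne.symm hj]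
      · simp
    rw [hval] at this
    exact lt_irrefl u this
  set s : ℝ := ∑ i, c i with hs
  have hs_nonneg : 0 ≤ s := Finset.sum_nonneg fun i _ => hc_nonneg i
  rcases eq_or_lt_of_le hs_nonneg with hs0 | hspos
  · -- s = 0 so all c i = 0, contradicting u ≤ f y for y ∈ C
    have hci0 : ∀ i ∈ Finset.univ, c i = 0 := by
      intro i _
      exact le_antisymm (by
        have := (Finset.sum_eq_zero_iff_of_nonneg (fun i _ => hc_nonneg i)).1 hs0.symm
        exact le_of_eq (this i (Finset.mem_univ i))) (hc_nonneg i)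
    obtain ⟨y0, hy0⟩ := hC
    have := hfK y0 (subset_convexHull ℝ C hy0)
    rw [hf_eq] at this
    have : u ≤ 0 := by
      calc u ≤ ∑ i, y0 i * c i := this
        _ = 0 := Finset.sum_eq_zero fun i _ => by rw [hci0 i (Finset.mem_univ i), mul_zero]
    linarith
  · -- s > 0 : scale c to get ξ with Σ ξ = 1/(1+ε/2) < 1
    have hden : (0 : ℝ) < (1 + ε / 2) * s := by positivity
    set ξ : Fin n → ℝ := fun i => c i / ((1 + ε / 2) * s) with hξ
    have hξ0 : ∀ i, 0 ≤ ξ i := fun i => div_nonneg (hc_nonneg i) hden.le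
    have hξsum : (∑ i, ξ i) < 1 := by
      have : (∑ i, ξ i) = 1 / (1 + ε / 2) := by
        rw [hξ, ← Finset.sum_div, ← hs]
        field_simp
      rw [this]
      rw [div_lt_one (by linarith)]
      linarith
    obtain ⟨y, hyC, hylt⟩ := h ξ hξ0 hξsum
    -- from hylt : Σ c i * y i < (1+ε/2) s
    have h1 : ∑ i, c i * y i < (1 + ε / 2) * s := by
      have : ∑ i, ξ i * y i = (∑ i, c i * y i) / ((1 + ε / 2) * s) := by
        rw [Finset.sum_div]
        exact Finset.sum_congr rfl fun i _ => by rw [hξ]; ring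
      rw [this, div_lt_one hden] at hylt
      linarith
    -- from hfU applied to constant (1 + ε/2) : (1+ε/2) s < u
    have h2 : (1 + ε / 2) * s < u := by
      have hmem : (fun _ : Fin n => (1 + ε / 2)) ∈ U := by
        intro j _; simp only [Set.mem_Iio]; linarith
      have := hfU _ hmem
      rw [hf_eq] at this
      have heq : ∑ i, (1 + ε / 2) * c i = (1 + ε / 2) * s := by
        rw [hs, Finset.mul_sum]
      rw [heq] at this
      exact this
    -- from hfK : u ≤ Σ y i * c i
    have h3 : u ≤ ∑ i, c i * y i := by
      have := hfK y (subset_convexHull ℝ C hyC)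
      rw [hf_eq] at this
      calc u ≤ ∑ i, y i * c i := this
        _ = ∑ i, c i * y i := Finset.sum_congr rfl fun i _ => mul_comm _ _
    linarith
end
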